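/- arXiv:1805.11316 — 5 statements merged into one kernel-verified Lean document; each statement's English description precedes it below -/
import Mathlib

section
/- The operator T_{f,b} satisfies ‖T_{f,b} g − T_{f,b} h‖_p ≤ Λ ‖g − h‖_p for all g, h ∈ L^p(I) (1 ≤ p ≤ ∞). Consequently, since Λ < 1, T_{f,b} is a contraction on the Banach space L^p(I) and possesses a unique fixed point f *_T b ∈ L^p(I). -/
open MeasureTheory ENNReal

noncomputable section

/-- The inverse of the increasing affine map `L n` sending `[x 0, x N]` onto
`[x n, x (n+1)]` (so `L n (x 0) = x n.castSucc` and `L n (x N) = x n.succ`). -/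
def Linv {N : ℕ} (x : Fin (N + 1) → ℝ) (n : Fin N) (y : ℝ) : ℝ :=
  x 0 + (y - x n.castSucc) * (x (Fin.last N) - x 0) / (x n.succ - x n.castSucc)

/-- The subinterval `I n` of the partition: `[x 0, x 1]` for `n = 0` and
`(x n, x (n+1)]` otherwise. -/
def subInt {N : ℕ} (x : Fin (N + 1) → ℝ) (n : Fin N) : Set ℝ :=
  if n.val = 0 then Set.Icc (x n.castSucc) (x n.succ)
  else Set.Ioc (x n.castSucc) (x n.succ)

/-- `h` is the image of `g` under the Read–Bajraktarević operator `T_{f,b}` with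
scale functions `α`, almost everywhere: on each `I n`,
`h = f + (α n ∘ Lₙ⁻¹) · ((g - b) ∘ Lₙ⁻¹)`. -/
def RBEq {N : ℕ} (μ : Measure ℝ) (x : Fin (N + 1) → ℝ) (α : Fin N → ℝ → ℝ)
    (f b g h : ℝ → ℝ) : Prop :=
  ∀ n : Fin N, ∀ᵐ t ∂μ, t ∈ subInt x n →
    h t = f t + α n (Linv x n t) * (g (Linv x n t) - b (Linv x n t))

/-- `h` satisfies the self-referential equation of `T_{f,b}`, i.e. `h` is a fixed
point of `T_{f,b}`; `h` is then the fractal convolution `f *_T b`. -/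
def SelfRef {N : ℕ} (μ : Measure ℝ) (x : Fin (N + 1) → ℝ) (α : Fin N → ℝ → ℝ)
    (f b h : ℝ → ℝ) : Prop :=
  RBEq μ x α f b h h

private lemma affine_map_volume (s k : ℝ) (hs : 0 < s) :
    Measure.map (fun y : ℝ => s * y + k) volume = ENNReal.ofReal s⁻¹ • volume := by
  have h1 : (fun y : ℝ => s * y + k) = (fun y : ℝ => y + k) ∘ (fun y : ℝ => s * y) := rfl
  rw [h1, ← Measure.map_map (measurable_add_const k) (measurable_const_mul s),
    show (fun y : ℝ => s * y) = (s * ·) from rfl, Real.map_volume_mul_left hs.ne',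
    Measure.map_smul, map_add_right_eq_self volume k, abs_of_pos (inv_pos.2 hs)]

private lemma affine_me (s k : ℝ) (hs : 0 < s) :
    MeasurableEmbedding (fun y : ℝ => s * y + k) :=
  (affineHomeomorph s k hs.ne').measurableEmbedding

private lemma affine_lintegral (s k : ℝ) (hs : 0 < s) (E : Set ℝ) (F : ℝ → ℝ≥0∞) :
    ∫⁻ t in E, F (s * t + k) ∂volume
      = ENNReal.ofReal s⁻¹ * ∫⁻ y in (fun t : ℝ => s * t + k) '' E, F y ∂volume := by
  have he := affine_me s k hs
  have h2 : Measure.map (fun t : ℝ => s * t + k) (volume.restrict E)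
      = ENNReal.ofReal s⁻¹ • volume.restrict ((fun t : ℝ => s * t + k) '' E) := by
    conv_lhs => rw [← Set.preimage_image_eq E he.injective]
    rw [← he.restrict_map, affine_map_volume s k hs, Measure.restrict_smul]
  rw [← he.lintegral_map, h2, lintegral_smul_measure, smul_eq_mul]

private lemma affine_preimage_null (s k : ℝ) (hs : 0 < s) {S : Set ℝ} (hS : volume S = 0) :
    volume ((fun t : ℝ => s * t + k) ⁻¹' S) = 0 := by
  have hsub : S ⊆ toMeasurable volume S := subset_toMeasurable _ _
  have hm : MeasurableSet (toMeasurable volume S) := measurableSet_toMeasurable _ _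
  have hS' : volume (toMeasurable volume S) = 0 := by rwa [measure_toMeasurable]
  refine measure_mono_null (Set.preimage_mono hsub) ?_
  have hmap := Measure.map_apply (f := fun t : ℝ => s * t + k) (by fun_prop) hm (μ := volume)
  rw [affine_map_volume s k hs] at hmap
  rw [← hmap, Measure.smul_apply, hS', smul_eq_mul, mul_zero]

private lemma telescope {N : ℕ} (x : Fin (N + 1) → ℝ) :
    ∑ n : Fin N, (x n.succ - x n.castSucc) = x (Fin.last N) - x 0 := by
  induction N with
  | zero => simp
  | succ m ih =>
    rw [Fin.sum_univ_castSucc]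
    have h2 := ih (fun i => x i.castSucc)
    simp only [Fin.succ_castSucc] at h2 ⊢
    rw [h2]
    simp only [Fin.succ_last, Fin.castSucc_zero]
    ring


/-- The operator `T_{f,b}` is Lipschitz with constant `Λ` on `L^p(I)`
and, since `Λ < 1`, it has a unique fixed point `f *_T b ∈ L^p(I)`. -/
theorem RB_operator_contraction_unique_fixed_point
    (N : ℕ) (hN : 2 ≤ N) (x : Fin (N + 1) → ℝ) (hx : StrictMono x)
    (μ : Measure ℝ) (hμ : μ = volume.restrict (Set.Icc (x 0) (x (Fin.last N))))
    (p : ℝ≥0∞) [Fact (1 ≤ p)]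
    (α : Fin N → Lp ℝ ∞ μ)
    (Λ : ℝ) (hΛdef : Λ = ⨆ n : Fin N, ‖α n‖) (hΛ : Λ < 1)
    (f b : Lp ℝ p μ)
    (T : Lp ℝ p μ → Lp ℝ p μ)
    (hT : ∀ g : Lp ℝ p μ, RBEq μ x (fun n => ⇑(α n)) ⇑f ⇑b ⇑g ⇑(T g)) :
    (∀ g h : Lp ℝ p μ, ‖T g - T h‖ ≤ Λ * ‖g - h‖) ∧
    (∃! fb : Lp ℝ p μ, T fb = fb) := by
  have hN0 : 0 < N := by omega
  have hAB : x 0 < x (Fin.last N) := hx (by rw [Fin.lt_def]; simpa using hN0)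
  have hcd : ∀ n : Fin N, x n.castSucc < x n.succ := fun n => hx Fin.castSucc_lt_succ
  set s : Fin N → ℝ := fun n => (x (Fin.last N) - x 0) / (x n.succ - x n.castSucc) with hs_def
  set k : Fin N → ℝ := fun n => x 0 - s n * x n.castSucc with hk_def
  have hs : ∀ n, 0 < s n := fun n => div_pos (sub_pos.2 hAB) (sub_pos.2 (hcd n))
  have hLinv : ∀ n t, Linv x n t = s n * t + k n := by
    intro n t
    have h := sub_ne_zero.2 (hcd n).ne'
    simp only [Linv, hs_def, hk_def]
    field_simp
    ring
  have hep1 : ∀ n, s n * x n.castSucc + k n = x 0 := by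
    intro n; simp only [hk_def]; ring
  have hep2 : ∀ n, s n * x n.succ + k n = x (Fin.last N) := by
    intro n
    have h := sub_ne_zero.2 (hcd n).ne'
    simp only [hs_def, hk_def]
    field_simp
    ring
  have hmeas_sub : ∀ n, MeasurableSet (subInt x n) := by
    intro n; unfold subInt
    split
    · exact measurableSet_Icc
    · exact measurableSet_Ioc
  have hmem_Icc : ∀ n t, t ∈ subInt x n → t ∈ Set.Icc (x n.castSucc) (x n.succ) := by
    intro n t ht
    unfold subInt at ht
    split at ht
    · exact ht
    · exact Set.Ioc_subset_Icc_self ht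
  have hsub_Icc : ∀ n, subInt x n ⊆ Set.Icc (x 0) (x (Fin.last N)) := by
    intro n t ht
    have h1 : x 0 ≤ x n.castSucc := hx.monotone (Fin.zero_le _)
    have h2 : x n.succ ≤ x (Fin.last N) := hx.monotone (Fin.le_last _)
    exact Set.Icc_subset_Icc h1 h2 (hmem_Icc n t ht)
  have himg : ∀ n t, t ∈ subInt x n → Linv x n t ∈ Set.Icc (x 0) (x (Fin.last N)) := by
    intro n t ht
    obtain ⟨h1, h2⟩ := hmem_Icc n t ht
    rw [hLinv]
    have hsn := (hs n).le
    constructor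
    · rw [← hep1 n]; nlinarith
    · rw [← hep2 n]; nlinarith
  -- cover
  have hcover : ∀ m : ℕ, (hm : m ≤ N) → 1 ≤ m →
      Set.Icc (x 0) (x ⟨m, by omega⟩) ⊆ ⋃ n, subInt x n := by
    intro m
    induction m with
    | zero => omega
    | succ j ih =>
      intro hm _
      by_cases hj : j = 0
      · subst hj
        refine Set.Subset.trans ?_ (Set.subset_iUnion _ (⟨0, hN0⟩ : Fin N))
        unfold subInt
        rw [if_pos rfl]
        apply le_of_eq
        congr 1
      · have hsplit :
            Set.Icc (x 0) (x ⟨j + 1, by omega⟩) =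
              Set.Icc (x 0) (x ⟨j, by omega⟩) ∪
                Set.Ioc (x ⟨j, by omega⟩) (x ⟨j + 1, by omega⟩) :=
          (Set.Icc_union_Ioc_eq_Icc (hx.monotone (by simp [Fin.le_def]))
            (hx.monotone (by simp [Fin.le_def]))).symm
        rw [hsplit]
        apply Set.union_subset (ih (by omega) (by omega))
        refine Set.Subset.trans ?_ (Set.subset_iUnion _ (⟨j, by omega⟩ : Fin N))
        unfold subInt
        rw [if_neg hj]
        apply le_of_eq
        congr 1
  have hcover_eq : Set.Icc (x 0) (x (Fin.last N)) = ⋃ n, subInt x n := by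
    refine Set.Subset.antisymm ?_ (Set.iUnion_subset hsub_Icc)
    have := hcover N le_rfl (by omega)
    simpa [Fin.last] using this
  -- disjoint
  have hdisj : Pairwise (Function.onFun Disjoint (subInt x)) := by
    have key : ∀ n m : Fin N, n.val < m.val → Disjoint (subInt x n) (subInt x m) := by
      intro n m hnm
      rw [Set.disjoint_left]
      intro t htn htm
      have h1 : t ≤ x n.succ := (hmem_Icc n t htn).2
      have h2 : x m.castSucc < t := by
        unfold subInt at htm
        rw [if_neg (by omega)] at htm
        exact htm.1
      have h3 : x n.succ ≤ x m.castSucc := hx.monotone (by simp [Fin.le_def]; omega)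
      linarith
    intro n m hnm
    have hne : n.val ≠ m.val := fun hh => hnm (Fin.ext hh)
    rcases Nat.lt_or_ge n.val m.val with h | h
    · exact key n m h
    · exact (key m n (by omega)).symm
  have hμsum : μ = Measure.sum (fun n => volume.restrict (subInt x n)) := by
    rw [hμ, hcover_eq, Measure.restrict_iUnion hdisj hmeas_sub]
  have hrestrict : ∀ n, μ.restrict (subInt x n) = volume.restrict (subInt x n) := by
    intro n
    rw [hμ, Measure.restrict_restrict (hmeas_sub n), Set.inter_eq_left.2 (hsub_Icc n)]
  have hae_piece : ∀ (n : Fin N) (P : ℝ → Prop), (∀ᵐ t ∂μ, t ∈ subInt x n → P t) →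
      ∀ᵐ t ∂(volume.restrict (subInt x n)), P t := by
    intro n P hP
    rw [← hrestrict n]
    filter_upwards [ae_restrict_of_ae hP, ae_restrict_mem (hmeas_sub n)] with t h1 h2
    exact h1 h2
  have hpull : ∀ (n : Fin N) (S : Set ℝ), μ S = 0 →
      ∀ᵐ t ∂(volume.restrict (subInt x n)), Linv x n t ∉ S := by
    intro n S hS
    have hS' : volume (S ∩ Set.Icc (x 0) (x (Fin.last N))) = 0 := by
      rw [hμ, Measure.restrict_apply' measurableSet_Icc] at hS
      exact hS
    have hnull : volume ((fun t : ℝ => s n * t + k n) ⁻¹'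
        (S ∩ Set.Icc (x 0) (x (Fin.last N)))) = 0 :=
      affine_preimage_null _ _ (hs n) hS'
    rw [ae_iff, Measure.restrict_apply' (hmeas_sub n)]
    refine measure_mono_null ?_ hnull
    rintro t ⟨ht1, ht2⟩
    have ht1' : Linv x n t ∈ S := not_not.1 ht1
    rw [hLinv] at ht1'
    refine ⟨ht1', ?_⟩
    show s n * t + k n ∈ Set.Icc (x 0) (x (Fin.last N))
    rw [← hLinv]
    exact himg n t ht2
  -- Λ facts
  have hbdd : BddAbove (Set.range fun n : Fin N => ‖α n‖) := (Set.finite_range _).bddAbove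
  have hΛ_ge : ∀ n, ‖α n‖ ≤ Λ := fun n => hΛdef ▸ le_ciSup hbdd n
  have hΛ0 : 0 ≤ Λ := le_trans (norm_nonneg (α ⟨0, hN0⟩)) (hΛ_ge ⟨0, hN0⟩)
  have hα_ae : ∀ n : Fin N, ∀ᵐ t ∂(volume.restrict (subInt x n)),
      ‖(α n) (Linv x n t)‖ ≤ Λ := by
    intro n
    have h1 : ∀ᵐ y ∂μ, ‖(α n) y‖ ≤ Λ := by
      have h2 : eLpNorm (α n) ∞ μ = ENNReal.ofReal ‖α n‖ := by
        rw [Lp.norm_def, ENNReal.ofReal_toReal (Lp.eLpNorm_ne_top _)]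
      have h3 := ae_le_eLpNormEssSup (μ := μ) (f := ⇑(α n))
      rw [← eLpNorm_exponent_top, h2] at h3
      filter_upwards [h3] with y hy
      have h4 : ENNReal.ofReal ‖(α n) y‖ ≤ ENNReal.ofReal Λ := by
        rw [ofReal_norm]
        exact le_trans (by exact_mod_cast hy) (ENNReal.ofReal_le_ofReal (hΛ_ge n))
      rwa [ENNReal.ofReal_le_ofReal_iff hΛ0] at h4
    have hS : μ {y | ¬ ‖(α n) y‖ ≤ Λ} = 0 := ae_iff.1 h1
    filter_upwards [hpull n _ hS] with t ht
    exact not_not.1 ht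
  -- piece lintegral identity
  have hint : ∀ (n : Fin N) (F : ℝ → ℝ≥0∞),
      ∫⁻ t in subInt x n, F (Linv x n t) ∂volume
        = ENNReal.ofReal ((x n.succ - x n.castSucc) / (x (Fin.last N) - x 0))
            * ∫⁻ y, F y ∂μ := by
    intro n F
    have h1 : ∫⁻ t in subInt x n, F (Linv x n t) ∂volume
        = ∫⁻ t in subInt x n, F (s n * t + k n) ∂volume := by
      apply lintegral_congr_ae
      filter_upwards with t
      rw [hLinv]
    rw [h1, affine_lintegral (s n) (k n) (hs n) _ F]
    have himg2 : volume.restrict ((fun t : ℝ => s n * t + k n) '' subInt x n) = μ := by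
      rw [hμ]
      unfold subInt
      split
      · congr 1
        rw [show (fun t : ℝ => s n * t + k n)
            = ⇑(affineHomeomorph (s n) (k n) (hs n).ne') from rfl,
          affineHomeomorph_image_Icc _ _ _ _ (hs n), hep1 n, hep2 n]
      · rw [show (fun t : ℝ => s n * t + k n)
            = ⇑(affineHomeomorph (s n) (k n) (hs n).ne') from rfl,
          affineHomeomorph_image_Ioc _ _ _ _ (hs n), hep1 n, hep2 n]
        exact Measure.restrict_congr_set Ioc_ae_eq_Icc
    rw [himg2]
    congr 1
    simp only [hs_def]
    rw [inv_div]
  have hsum1 : ∑' n : Fin N,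
      ENNReal.ofReal ((x n.succ - x n.castSucc) / (x (Fin.last N) - x 0)) = 1 := by
    rw [tsum_fintype, ← ENNReal.ofReal_sum_of_nonneg
      (fun n _ => div_nonneg (sub_nonneg.2 (hcd n).le) (sub_nonneg.2 hAB.le))]
    rw [← Finset.sum_div, telescope, div_self (sub_ne_zero.2 hAB.ne'), ENNReal.ofReal_one]
  -- main bound
  have main : ∀ g h : Lp ℝ p μ, ‖T g - T h‖ ≤ Λ * ‖g - h‖ := by
    intro g h
    set u : ℝ → ℝ := fun t => g t - h t with hu
    set v : ℝ → ℝ := fun t => T g t - T h t with hv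
    have hv_ae : ∀ n : Fin N, ∀ᵐ t ∂(volume.restrict (subInt x n)),
        ‖v t‖ ≤ Λ * ‖u (Linv x n t)‖ := by
      intro n
      filter_upwards [hae_piece n _ (hT g n), hae_piece n _ (hT h n), hα_ae n] with t h1 h2 h3
      have hvt : v t = (α n) (Linv x n t) * u (Linv x n t) := by
        simp only [hv, hu, h1, h2]
        ring
      rw [hvt, norm_mul]
      exact mul_le_mul_of_nonneg_right h3 (norm_nonneg _)
    have hv_enorm : ∀ n : Fin N, ∀ᵐ t ∂(volume.restrict (subInt x n)),
        (‖v t‖₊ : ℝ≥0∞) ≤ ENNReal.ofReal Λ * (‖u (Linv x n t)‖₊ : ℝ≥0∞) := by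
      intro n
      filter_upwards [hv_ae n] with t ht
      rw [← enorm_eq_nnnorm, ← enorm_eq_nnnorm, ← ofReal_norm, ← ofReal_norm,
        ← ENNReal.ofReal_mul hΛ0]
      exact ENNReal.ofReal_le_ofReal ht
    have hkey : eLpNorm v p μ ≤ ENNReal.ofReal Λ * eLpNorm u p μ := by
      rcases eq_or_ne p ∞ with hp | hp
      · rw [hp, eLpNorm_exponent_top, eLpNorm_exponent_top]
        set M := eLpNormEssSup u μ with hM
        have hMae : μ {y | ¬ ((‖u y‖₊ : ℝ≥0∞) ≤ M)} = 0 := ae_iff.1 ae_le_eLpNormEssSup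
        have hb : ∀ᵐ t ∂μ, (‖v t‖₊ : ℝ≥0∞) ≤ ENNReal.ofReal Λ * M := by
          rw [hμsum, Measure.ae_sum_iff]
          intro n
          filter_upwards [hv_enorm n, hpull n _ hMae] with t h1 h2
          have h3 : (‖u (Linv x n t)‖₊ : ℝ≥0∞) ≤ M := not_not.1 h2
          exact h1.trans (by gcongr)
        exact essSup_le_of_ae_le _ hb
      · have hp0 : p ≠ 0 := (lt_of_lt_of_le zero_lt_one (Fact.out : 1 ≤ p)).ne'
        have hq : 0 < p.toReal := ENNReal.toReal_pos hp0 hp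
        rw [eLpNorm_eq_lintegral_rpow_enorm_toReal hp0 hp, eLpNorm_eq_lintegral_rpow_enorm_toReal hp0 hp]
        simp only [enorm_eq_nnnorm]
        set q := p.toReal with hq_def
        set J := ∫⁻ t, (‖u t‖₊ : ℝ≥0∞) ^ q ∂μ with hJ
        have hstep : ∫⁻ t, (‖v t‖₊ : ℝ≥0∞) ^ q ∂μ ≤ (ENNReal.ofReal Λ) ^ q * J := by
          conv_lhs => rw [hμsum]
          rw [lintegral_sum_measure]
          have hpiece : ∀ n : Fin N,
              ∫⁻ t, (‖v t‖₊ : ℝ≥0∞) ^ q ∂(volume.restrict (subInt x n))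
                ≤ (ENNReal.ofReal Λ) ^ q
                  * (ENNReal.ofReal ((x n.succ - x n.castSucc) / (x (Fin.last N) - x 0)) * J) := by
            intro n
            have h1 : ∫⁻ t, (‖v t‖₊ : ℝ≥0∞) ^ q ∂(volume.restrict (subInt x n))
                ≤ ∫⁻ t, (ENNReal.ofReal Λ) ^ q * (‖u (Linv x n t)‖₊ : ℝ≥0∞) ^ q
                    ∂(volume.restrict (subInt x n)) := by
              refine lintegral_mono_ae ?_
              filter_upwards [hv_enorm n] with t ht
              calc (‖v t‖₊ : ℝ≥0∞) ^ q
                  ≤ (ENNReal.ofReal Λ * (‖u (Linv x n t)‖₊ : ℝ≥0∞)) ^ q :=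
                    ENNReal.rpow_le_rpow ht hq.le
                _ = _ := ENNReal.mul_rpow_of_nonneg _ _ hq.le
            refine h1.trans ?_
            rw [lintegral_const_mul' _ _
              (ENNReal.rpow_ne_top_of_nonneg hq.le ENNReal.ofReal_ne_top)]
            have h2 : ∫⁻ t, (‖u (Linv x n t)‖₊ : ℝ≥0∞) ^ q ∂(volume.restrict (subInt x n))
                = ENNReal.ofReal ((x n.succ - x n.castSucc) / (x (Fin.last N) - x 0)) * J :=
              hint n (fun y => (‖u y‖₊ : ℝ≥0∞) ^ q)
            rw [h2]
          calc ∑' n : Fin N, ∫⁻ t, (‖v t‖₊ : ℝ≥0∞) ^ q ∂(volume.restrict (subInt x n))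
              ≤ ∑' n : Fin N, (ENNReal.ofReal Λ) ^ q
                  * (ENNReal.ofReal ((x n.succ - x n.castSucc) / (x (Fin.last N) - x 0)) * J) :=
                ENNReal.tsum_le_tsum hpiece
            _ = (ENNReal.ofReal Λ) ^ q
                  * ((∑' n : Fin N,
                      ENNReal.ofReal ((x n.succ - x n.castSucc) / (x (Fin.last N) - x 0))) * J) := by
                rw [ENNReal.tsum_mul_left, ENNReal.tsum_mul_right]
            _ = (ENNReal.ofReal Λ) ^ q * J := by rw [hsum1, one_mul]
        calc (∫⁻ t, (‖v t‖₊ : ℝ≥0∞) ^ q ∂μ) ^ (1 / q)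
            ≤ ((ENNReal.ofReal Λ) ^ q * J) ^ (1 / q) :=
              ENNReal.rpow_le_rpow hstep (by positivity)
          _ = ENNReal.ofReal Λ * J ^ (1 / q) := by
              rw [ENNReal.mul_rpow_of_nonneg _ _ (by positivity), ← ENNReal.rpow_mul,
                mul_one_div_cancel hq.ne', ENNReal.rpow_one]
    have e1 : (⇑(T g - T h) : ℝ → ℝ) =ᵐ[μ] v := Lp.coeFn_sub (T g) (T h)
    have e2 : (⇑(g - h) : ℝ → ℝ) =ᵐ[μ] u := Lp.coeFn_sub g h
    rw [Lp.norm_def, Lp.norm_def, eLpNorm_congr_ae e1, eLpNorm_congr_ae e2]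
    have hufin : eLpNorm u p μ ≠ ∞ := by
      rw [← eLpNorm_congr_ae e2]; exact Lp.eLpNorm_ne_top _
    have hne : ENNReal.ofReal Λ * eLpNorm u p μ ≠ ∞ :=
      ENNReal.mul_ne_top ENNReal.ofReal_ne_top hufin
    calc (eLpNorm v p μ).toReal ≤ (ENNReal.ofReal Λ * eLpNorm u p μ).toReal :=
        ENNReal.toReal_mono hne hkey
      _ = Λ * (eLpNorm u p μ).toReal := by
        rw [ENNReal.toReal_mul, ENNReal.toReal_ofReal hΛ0]
  refine ⟨main, ?_⟩
  have hK : ContractingWith Λ.toNNReal T := by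
    constructor
    · have h1 : (Λ.toNNReal : ℝ) < 1 := by
        rw [Real.coe_toNNReal']
        exact max_lt hΛ one_pos
      exact_mod_cast h1
    · apply LipschitzWith.of_dist_le_mul
      intro g h
      rw [dist_eq_norm, dist_eq_norm]
      calc ‖T g - T h‖ ≤ Λ * ‖g - h‖ := main g h
        _ ≤ Λ.toNNReal * ‖g - h‖ :=
          mul_le_mul_of_nonneg_right (Real.le_coe_toNNReal Λ) (norm_nonneg _)
  haveI : Nonempty (Lp ℝ p μ) := ⟨0⟩
  exact ⟨ContractingWith.fixedPoint T hK, hK.fixedPoint_isFixedPt,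
    fun y hy => hK.fixedPoint_unique hy⟩

end
end

section
/- The fractal convolution map P : L^p(I) × L^p(I) → L^p(I), P(f,b) = f *_T b, is linear: for all f, f', b, b' ∈ L^p(I) and γ ∈ ℝ, (γf + f') *_T (γb + b') = γ(f *_T b) + (f' *_T b'). Moreover it is bounded: ‖f *_T b‖_p ≤ (1/(1−Λ))(‖f‖_p + ‖b‖_p) for all f, b ∈ L^p(I); in particular the operator norm of P with respect to the product norm ‖(f,b)‖ = ‖f‖_p + ‖b‖_p is at most 1/(1−Λ). -/
open MeasureTheory ENNReal

noncomputable section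

namespace FCAux

variable {N : ℕ} {x : Fin (N + 1) → ℝ}

/-- image interval -/
def gInt (x : Fin (N + 1) → ℝ) (n : Fin N) : Set ℝ :=
  if n.val = 0 then Set.Icc (x 0) (x (Fin.last N))
  else Set.Ioc (x 0) (x (Fin.last N))

lemma hDelta (hx : StrictMono x) (n : Fin N) : 0 < x n.succ - x n.castSucc :=
  sub_pos.2 (hx Fin.castSucc_lt_succ)

lemma hWpos (hN : 0 < N) (hx : StrictMono x) : 0 < x (Fin.last N) - x 0 :=
  sub_pos.2 (hx (by simp [Fin.lt_def, hN]))

lemma linv_eq (hx : StrictMono x) (n : Fin N) :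
    Linv x n = fun t => ((x (Fin.last N) - x 0) / (x n.succ - x n.castSucc)) * t +
      (x 0 - x n.castSucc * ((x (Fin.last N) - x 0) / (x n.succ - x n.castSucc))) := by
  funext t; unfold Linv; ring

lemma linv_me (hN : 0 < N) (hx : StrictMono x) (n : Fin N) :
    MeasurableEmbedding (Linv x n) := by
  set c := (x (Fin.last N) - x 0) / (x n.succ - x n.castSucc) with hc
  have hc0 : c ≠ 0 := ne_of_gt (div_pos (hWpos hN hx) (hDelta hx n))
  have : Linv x n = ⇑((Homeomorph.mulLeft₀ c hc0).trans
      (Homeomorph.addRight (x 0 - x n.castSucc * c))) := by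
    rw [linv_eq hx n]; funext t; simp [c]
  rw [this]
  exact (Homeomorph.measurableEmbedding _)

lemma map_volume_affine (c d : ℝ) (hc : 0 < c) :
    Measure.map (fun t => c * t + d) volume = ENNReal.ofReal c⁻¹ • volume := by
  have h : (fun t : ℝ => c * t + d) = (fun y => y + d) ∘ (fun t => c * t) := rfl
  rw [h, ← Measure.map_map (measurable_add_const d) (measurable_const_mul c)]
  have : Measure.map (fun t : ℝ => c * t) volume = ENNReal.ofReal |c⁻¹| • volume :=
    Real.map_volume_mul_left hc.ne'
  rw [this, Measure.map_smul, map_add_right_eq_self, abs_of_pos (inv_pos.2 hc)]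

lemma affine_preimage_Icc {c d a b : ℝ} (hc : 0 < c) :
    (fun t => c * t + d) ⁻¹' Set.Icc (c * a + d) (c * b + d) = Set.Icc a b := by
  ext t; simp [Set.mem_Icc, mul_le_mul_iff_of_pos_left hc]

lemma affine_preimage_Ioc {c d a b : ℝ} (hc : 0 < c) :
    (fun t => c * t + d) ⁻¹' Set.Ioc (c * a + d) (c * b + d) = Set.Ioc a b := by
  ext t; simp [Set.mem_Ioc, mul_le_mul_iff_of_pos_left hc, mul_lt_mul_iff_of_pos_left hc]

lemma linv_preimage (hN : 0 < N) (hx : StrictMono x) (n : Fin N) :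
    Linv x n ⁻¹' (gInt x n) = subInt x n := by
  set c := (x (Fin.last N) - x 0) / (x n.succ - x n.castSucc) with hcdef
  have hc : 0 < c := div_pos (hWpos hN hx) (hDelta hx n)
  have h1 : x 0 = c * (x n.castSucc) + (x 0 - x n.castSucc * c) := by ring
  have h2 : x (Fin.last N) = c * (x n.succ) + (x 0 - x n.castSucc * c) := by
    have hΔ : x n.succ - x n.castSucc ≠ 0 := (hDelta hx n).ne'
    rw [hcdef]; field_simp; ring
  rw [linv_eq hx n, gInt, subInt, ← hcdef]
  set d := x 0 - x n.castSucc * c with hd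
  rw [hd] at h1 h2
  split
  · rw [h1, h2, affine_preimage_Icc hc]
  · rw [h1, h2, affine_preimage_Ioc hc]

lemma gInt_measurable (n : Fin N) : MeasurableSet (gInt x n) := by
  unfold gInt; split <;> [exact measurableSet_Icc; exact measurableSet_Ioc]

lemma subInt_measurable (n : Fin N) : MeasurableSet (subInt x n) := by
  unfold subInt; split <;> [exact measurableSet_Icc; exact measurableSet_Ioc]

lemma gInt_subset (n : Fin N) : gInt x n ⊆ Set.Icc (x 0) (x (Fin.last N)) := by
  unfold gInt; split <;> [exact subset_rfl; exact Set.Ioc_subset_Icc_self]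

lemma subInt_subset (hx : StrictMono x) (n : Fin N) :
    subInt x n ⊆ Set.Icc (x 0) (x (Fin.last N)) := by
  have h1 : x 0 ≤ x n.castSucc := hx.monotone (Fin.zero_le _)
  have h2 : x n.succ ≤ x (Fin.last N) := hx.monotone (Fin.le_last _)
  unfold subInt; split
  · exact Set.Icc_subset_Icc h1 h2
  · exact Set.Ioc_subset_Icc_self.trans (Set.Icc_subset_Icc h1 h2)

lemma map_restrict (hN : 0 < N) (hx : StrictMono x) (n : Fin N) :
    Measure.map (Linv x n) (volume.restrict (subInt x n)) =
      ENNReal.ofReal ((x n.succ - x n.castSucc) / (x (Fin.last N) - x 0)) •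
        volume.restrict (gInt x n) := by
  conv_lhs => rw [← linv_preimage hN hx n]
  rw [← Measure.restrict_map (linv_me hN hx n).measurable (gInt_measurable n)]
  rw [linv_eq hx n, map_volume_affine _ _ (div_pos (hWpos hN hx) (hDelta hx n)),
    Measure.restrict_smul, inv_div]

lemma pullback_ae (hN : 0 < N) (hx : StrictMono x) (n : Fin N) {q : ℝ → Prop}
    (hq : ∀ᵐ s ∂(volume.restrict (Set.Icc (x 0) (x (Fin.last N)))), q s) :
    ∀ᵐ t ∂(volume.restrict (subInt x n)), q (Linv x n t) := by
  have h1 : ∀ᵐ s ∂(volume.restrict (gInt x n)), q s :=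
    ae_mono (Measure.restrict_mono (gInt_subset n) le_rfl) hq
  have h2 : ∀ᵐ s ∂(ENNReal.ofReal ((x n.succ - x n.castSucc) / (x (Fin.last N) - x 0)) •
      volume.restrict (gInt x n)), q s := Measure.ae_smul_measure h1 _
  rw [← map_restrict hN hx n] at h2
  exact (linv_me hN hx n).ae_map_iff.mp h2

lemma covering (hN : 0 < N) (hx : StrictMono x) :
    Set.Icc (x 0) (x (Fin.last N)) ⊆ ⋃ n, subInt x n := by
  classical
  intro t ht
  obtain ⟨ht0, htN⟩ := ht
  have hex : ∃ k, ∃ _ : k < N, t ≤ x ⟨k + 1, by omega⟩ := by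
    refine ⟨N - 1, by omega, ?_⟩
    have he : (⟨N - 1 + 1, by omega⟩ : Fin (N + 1)) = Fin.last N := by
      apply Fin.ext; simp [Fin.last]; omega
    rw [he]; exact htN
  obtain ⟨hk, hkt⟩ := Nat.find_spec hex
  set k := Nat.find hex with hkdef
  refine Set.mem_iUnion.2 ⟨⟨k, hk⟩, ?_⟩
  have hsucc : ((⟨k, hk⟩ : Fin N).succ : Fin (N + 1)) = ⟨k + 1, by omega⟩ := rfl
  have htsucc : t ≤ x (⟨k, hk⟩ : Fin N).succ := by rw [hsucc]; exact hkt
  unfold subInt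
  by_cases h0 : k = 0
  · have hcs : ((⟨k, hk⟩ : Fin N).castSucc : Fin (N + 1)) = 0 := by
      apply Fin.ext; simp [h0]
    rw [if_pos (show ((⟨k, hk⟩ : Fin N) : ℕ) = 0 from h0), hcs]
    exact ⟨ht0, htsucc⟩
  · simp only [if_neg h0]
    refine ⟨?_, htsucc⟩
    by_contra hle
    push_neg at hle
    have hk1 : k - 1 < N := by omega
    have : t ≤ x ⟨k - 1 + 1, by omega⟩ := by
      have : ((⟨k - 1 + 1, by omega⟩ : Fin (N + 1))) =
          ((⟨k, hk⟩ : Fin N).castSucc : Fin (N + 1)) := by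
        apply Fin.ext; simp [Fin.castSucc, Fin.castAdd, Fin.castLE]; omega
      rw [this]; exact hle
    exact Nat.find_min hex (by omega : k - 1 < k) ⟨hk1, this⟩

lemma sum_delta : ∑ n : Fin N, (x n.succ - x n.castSucc) = x (Fin.last N) - x 0 := by
  set y : ℕ → ℝ := fun k => x ⟨min k N, by omega⟩ with hy
  have h1 : ∑ n : Fin N, (x n.succ - x n.castSucc) =
      ∑ i ∈ Finset.range N, (y (i + 1) - y i) := by
    rw [← Fin.sum_univ_eq_sum_range (fun i => y (i + 1) - y i) N]
    refine Finset.sum_congr rfl fun n _ => ?_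
    have e1 : (⟨min (n.val + 1) N, by omega⟩ : Fin (N + 1)) = n.succ := by
      apply Fin.ext; simp; try omega
    have e2 : (⟨min n.val N, by omega⟩ : Fin (N + 1)) = n.castSucc := by
      apply Fin.ext; simp; try omega
    simp only [hy, e1, e2]
  rw [h1, Finset.sum_range_sub y]
  have e3 : (⟨min N N, by omega⟩ : Fin (N + 1)) = Fin.last N := by
    apply Fin.ext; simp [Fin.last]
  have e4 : (⟨min 0 N, by omega⟩ : Fin (N + 1)) = 0 := by
    apply Fin.ext; simp
  simp only [hy, e3, e4]
lemma ofReal_norm_eq_coe_nnnorm (a : ℝ) : ENNReal.ofReal ‖a‖ = (‖a‖₊ : ℝ≥0∞) :=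
  ofReal_norm a

lemma eLpNorm_eq_lintegral_rpow_nnnorm {μ : Measure ℝ} {p : ℝ≥0∞} {f : ℝ → ℝ} (h0 : p ≠ 0)
    (htop : p ≠ ∞) :
    eLpNorm f p μ = (∫⁻ t, (‖f t‖₊ : ℝ≥0∞) ^ p.toReal ∂μ) ^ (1 / p.toReal) :=
  eLpNorm_eq_lintegral_rpow_enorm_toReal h0 htop

lemma comp_bound (hN : 0 < N) (hx : StrictMono x) {p : ℝ≥0∞} {g : ℝ → ℝ}
    (hg : AEStronglyMeasurable g (volume.restrict (Set.Icc (x 0) (x (Fin.last N)))))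
    (n : Fin N) :
    eLpNorm (fun t => g (Linv x n t)) p (volume.restrict (subInt x n)) ≤
      ENNReal.ofReal ((x n.succ - x n.castSucc) / (x (Fin.last N) - x 0)) ^ (1 / p).toReal *
        eLpNorm g p (volume.restrict (Set.Icc (x 0) (x (Fin.last N)))) := by
  set μI := volume.restrict (Set.Icc (x 0) (x (Fin.last N))) with hμI
  set c := ENNReal.ofReal ((x n.succ - x n.castSucc) / (x (Fin.last N) - x 0)) with hc
  have hc0 : c ≠ 0 := by
    rw [hc, Ne, ENNReal.ofReal_eq_zero, not_le]
    exact div_pos (hDelta hx n) (hWpos hN hx)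
  have hle : volume.restrict (gInt x n) ≤ μI :=
    Measure.restrict_mono (gInt_subset n) le_rfl
  have hac : Measure.map (Linv x n) (volume.restrict (subInt x n)) ≪ μI := by
    rw [map_restrict hN hx n, ← hc]
    exact Measure.smul_absolutelyContinuous.trans (Measure.absolutelyContinuous_of_le hle)
  have hg' : AEStronglyMeasurable g (Measure.map (Linv x n) (volume.restrict (subInt x n))) :=
    hg.mono_ac hac
  have key := eLpNorm_map_measure (p := p) hg' (linv_me hN hx n).measurable.aemeasurable
  calc eLpNorm (fun t => g (Linv x n t)) p (volume.restrict (subInt x n))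
      = eLpNorm g p (Measure.map (Linv x n) (volume.restrict (subInt x n))) := key.symm
    _ = c ^ (1 / p).toReal • eLpNorm g p (volume.restrict (gInt x n)) := by
        rw [map_restrict hN hx n, ← hc, eLpNorm_smul_measure_of_ne_zero hc0]
    _ ≤ c ^ (1 / p).toReal * eLpNorm g p μI := by
        rw [smul_eq_mul]; exact mul_le_mul_right (eLpNorm_mono_measure g hle) _

lemma core (hN : 0 < N) (hx : StrictMono x) {p : ℝ≥0∞} {g h : ℝ → ℝ} {Λ' : ℝ} (hΛ0 : 0 ≤ Λ')
    (hg : AEStronglyMeasurable g (volume.restrict (Set.Icc (x 0) (x (Fin.last N)))))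
    (hb : ∀ n : Fin N, ∀ᵐ t ∂(volume.restrict (subInt x n)), ‖h t‖ ≤ Λ' * ‖g (Linv x n t)‖) :
    eLpNorm h p (volume.restrict (Set.Icc (x 0) (x (Fin.last N)))) ≤
      ENNReal.ofReal Λ' * eLpNorm g p (volume.restrict (Set.Icc (x 0) (x (Fin.last N)))) := by
  set μI := volume.restrict (Set.Icc (x 0) (x (Fin.last N))) with hμI
  have hbe : ∀ n : Fin N, ∀ᵐ t ∂(volume.restrict (subInt x n)),
      (‖h t‖₊ : ℝ≥0∞) ≤ ENNReal.ofReal Λ' * (‖g (Linv x n t)‖₊ : ℝ≥0∞) := by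
    intro n
    filter_upwards [hb n] with t ht
    calc (‖h t‖₊ : ℝ≥0∞) = ENNReal.ofReal ‖h t‖ := (ofReal_norm_eq_coe_nnnorm _).symm
      _ ≤ ENNReal.ofReal (Λ' * ‖g (Linv x n t)‖) := ENNReal.ofReal_le_ofReal ht
      _ = _ := by rw [ENNReal.ofReal_mul hΛ0, ofReal_norm_eq_coe_nnnorm]
  by_cases hp0 : p = 0
  · simp [hp0]
  by_cases hpt : p = ∞
  · subst hpt
    rw [eLpNorm_exponent_top, eLpNorm_exponent_top]
    refine essSup_le_of_ae_le _ ?_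
    have hn : ∀ n : Fin N, ∀ᵐ t ∂(volume.restrict (subInt x n)),
        (‖h t‖₊ : ℝ≥0∞) ≤ ENNReal.ofReal Λ' * eLpNormEssSup g μI := by
      intro n
      have hgs : ∀ᵐ s ∂μI, (‖g s‖₊ : ℝ≥0∞) ≤ eLpNormEssSup g μI := ae_le_eLpNormEssSup
      filter_upwards [hbe n, pullback_ae hN hx n hgs] with t h1 h2
      exact h1.trans (mul_le_mul_right h2 _)
    have hu := (ae_restrict_iUnion_iff (fun n : Fin N => subInt x n)
        (fun t => (‖h t‖₊ : ℝ≥0∞) ≤ ENNReal.ofReal Λ' * eLpNormEssSup g μI)).2 hn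
    exact ae_mono (Measure.restrict_mono (covering hN hx) le_rfl) hu
  · rw [eLpNorm_eq_lintegral_rpow_nnnorm hp0 hpt, eLpNorm_eq_lintegral_rpow_nnnorm hp0 hpt]
    have hpr : 0 < p.toReal := ENNReal.toReal_pos hp0 hpt
    set pr := p.toReal with hprdef
    have hcan : ∀ a : ℝ≥0∞, (a ^ (1 / pr)) ^ pr = a := fun a => by
      rw [← ENNReal.rpow_mul, one_div, inv_mul_cancel₀ hpr.ne', ENNReal.rpow_one]
    have hinv : (1 / p).toReal = 1 / pr := by
      rw [one_div, one_div, ENNReal.toReal_inv, hprdef]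
    have key : (∫⁻ t, (‖h t‖₊ : ℝ≥0∞) ^ pr ∂μI) ≤
        (ENNReal.ofReal Λ') ^ pr * ∫⁻ t, (‖g t‖₊ : ℝ≥0∞) ^ pr ∂μI := by
      set K := ∫⁻ t, (‖g t‖₊ : ℝ≥0∞) ^ pr ∂μI with hK
      have pern : ∀ n : Fin N, (∫⁻ t in subInt x n, (‖h t‖₊ : ℝ≥0∞) ^ pr) ≤
          (ENNReal.ofReal Λ') ^ pr *
            (ENNReal.ofReal ((x n.succ - x n.castSucc) / (x (Fin.last N) - x 0)) * K) := by
        intro n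
        have step1 : (∫⁻ t in subInt x n, (‖h t‖₊ : ℝ≥0∞) ^ pr) ≤
            ∫⁻ t in subInt x n, (ENNReal.ofReal Λ' * (‖g (Linv x n t)‖₊ : ℝ≥0∞)) ^ pr :=
          lintegral_mono_ae ((hbe n).mono fun t ht => ENNReal.rpow_le_rpow ht hpr.le)
        have step2 : (∫⁻ t in subInt x n, (ENNReal.ofReal Λ' * (‖g (Linv x n t)‖₊ : ℝ≥0∞)) ^ pr)
            = (ENNReal.ofReal Λ') ^ pr *
              ∫⁻ t in subInt x n, ((‖g (Linv x n t)‖₊ : ℝ≥0∞)) ^ pr := by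
          simp_rw [ENNReal.mul_rpow_of_nonneg _ _ hpr.le]
          exact lintegral_const_mul' _ _
            (ENNReal.rpow_ne_top_of_nonneg hpr.le ENNReal.ofReal_ne_top)
        have step3 : (∫⁻ t in subInt x n, ((‖g (Linv x n t)‖₊ : ℝ≥0∞)) ^ pr) =
            (eLpNorm (fun t => g (Linv x n t)) p (volume.restrict (subInt x n))) ^ pr := by
          rw [eLpNorm_eq_lintegral_rpow_nnnorm hp0 hpt, hcan]
        have step5 : (eLpNorm (fun t => g (Linv x n t)) p (volume.restrict (subInt x n))) ^ pr ≤
            ENNReal.ofReal ((x n.succ - x n.castSucc) / (x (Fin.last N) - x 0)) * K := by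
          calc (eLpNorm (fun t => g (Linv x n t)) p (volume.restrict (subInt x n))) ^ pr
              ≤ (ENNReal.ofReal ((x n.succ - x n.castSucc) / (x (Fin.last N) - x 0)) ^ (1 / p).toReal
                  * eLpNorm g p μI) ^ pr :=
                ENNReal.rpow_le_rpow (comp_bound hN hx hg n) hpr.le
            _ = _ := by
                rw [ENNReal.mul_rpow_of_nonneg _ _ hpr.le, hinv, hcan,
                  eLpNorm_eq_lintegral_rpow_nnnorm hp0 hpt, hcan]
        calc (∫⁻ t in subInt x n, (‖h t‖₊ : ℝ≥0∞) ^ pr) ≤ _ := step1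
          _ = _ := step2
          _ ≤ _ := by rw [step3]; exact mul_le_mul_right step5 _
      have sum1 : (∑' n : Fin N,
          ENNReal.ofReal ((x n.succ - x n.castSucc) / (x (Fin.last N) - x 0))) = 1 := by
        rw [tsum_fintype, ← ENNReal.ofReal_sum_of_nonneg (fun i _ =>
          div_nonneg (sub_nonneg.2 (hx.monotone (Fin.castSucc_lt_succ : i.castSucc < i.succ).le)) (hWpos hN hx).le),
          ← Finset.sum_div, sum_delta, div_self (hWpos hN hx).ne', ENNReal.ofReal_one]
      calc (∫⁻ t, (‖h t‖₊ : ℝ≥0∞) ^ pr ∂μI)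
          ≤ ∫⁻ t in ⋃ n, subInt x n, (‖h t‖₊ : ℝ≥0∞) ^ pr :=
            lintegral_mono' (Measure.restrict_mono (covering hN hx) le_rfl) le_rfl
        _ ≤ ∑' n : Fin N, ∫⁻ t in subInt x n, (‖h t‖₊ : ℝ≥0∞) ^ pr :=
            lintegral_iUnion_le _ _
        _ ≤ ∑' n : Fin N, (ENNReal.ofReal Λ') ^ pr *
              (ENNReal.ofReal ((x n.succ - x n.castSucc) / (x (Fin.last N) - x 0)) * K) :=
            ENNReal.tsum_le_tsum pern
        _ = (ENNReal.ofReal Λ') ^ pr * ((∑' n : Fin N,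
              ENNReal.ofReal ((x n.succ - x n.castSucc) / (x (Fin.last N) - x 0))) * K) := by
            rw [ENNReal.tsum_mul_left, ENNReal.tsum_mul_right]
        _ = (ENNReal.ofReal Λ') ^ pr * K := by rw [sum1, one_mul]
    calc (∫⁻ t, (‖h t‖₊ : ℝ≥0∞) ^ pr ∂μI) ^ (1 / pr)
        ≤ ((ENNReal.ofReal Λ') ^ pr * ∫⁻ t, (‖g t‖₊ : ℝ≥0∞) ^ pr ∂μI) ^ (1 / pr) :=
          ENNReal.rpow_le_rpow key (by positivity)
      _ = ENNReal.ofReal Λ' * (∫⁻ t, (‖g t‖₊ : ℝ≥0∞) ^ pr ∂μI) ^ (1 / pr) := by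
          rw [ENNReal.mul_rpow_of_nonneg _ _ (by positivity), ← ENNReal.rpow_mul,
            mul_one_div_cancel hpr.ne', ENNReal.rpow_one]
/-- convert the a.e.-implication form to restricted-measure form -/
lemma res (hx : StrictMono x) (n : Fin N) {Q : ℝ → Prop}
    (hQ : ∀ᵐ t ∂(volume.restrict (Set.Icc (x 0) (x (Fin.last N)))), t ∈ subInt x n → Q t) :
    ∀ᵐ t ∂(volume.restrict (subInt x n)), Q t := by
  have h := (ae_restrict_iff' (subInt_measurable n)).2 hQ
  rwa [Measure.restrict_restrict (subInt_measurable n),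
    Set.inter_eq_self_of_subset_left (subInt_subset hx n)] at h

lemma unres (hx : StrictMono x) (n : Fin N) {Q : ℝ → Prop}
    (hQ : ∀ᵐ t ∂(volume.restrict (subInt x n)), Q t) :
    ∀ᵐ t ∂(volume.restrict (Set.Icc (x 0) (x (Fin.last N)))), t ∈ subInt x n → Q t := by
  apply (ae_restrict_iff' (subInt_measurable n)).1
  rwa [Measure.restrict_restrict (subInt_measurable n),
    Set.inter_eq_self_of_subset_left (subInt_subset hx n)]

lemma uniq (hN : 0 < N) (hx : StrictMono x) {p : ℝ≥0∞} [Fact (1 ≤ p)]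
    {α : Fin N → ℝ → ℝ} {Λ : ℝ} (hΛ0 : 0 ≤ Λ) (hΛ : Λ < 1)
    (hα : ∀ n, ∀ᵐ s ∂(volume.restrict (Set.Icc (x 0) (x (Fin.last N)))), ‖α n s‖ ≤ Λ)
    {f b : ℝ → ℝ}
    (h₁ h₂ : Lp ℝ p (volume.restrict (Set.Icc (x 0) (x (Fin.last N)))))
    (H1 : SelfRef (volume.restrict (Set.Icc (x 0) (x (Fin.last N)))) x α f b ⇑h₁)
    (H2 : SelfRef (volume.restrict (Set.Icc (x 0) (x (Fin.last N)))) x α f b ⇑h₂) :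
    h₁ = h₂ := by
  set g : ℝ → ℝ := ⇑h₁ - ⇑h₂ with hg
  have hb : ∀ n : Fin N, ∀ᵐ t ∂(volume.restrict (subInt x n)),
      ‖g t‖ ≤ Λ * ‖g (Linv x n t)‖ := by
    intro n
    filter_upwards [res hx n (H1 n), res hx n (H2 n), pullback_ae hN hx n (hα n)]
      with t e1 e2 e3
    have egt : g t = α n (Linv x n t) * g (Linv x n t) := by
      simp only [hg, Pi.sub_apply]
      rw [e1, e2]; ring
    rw [egt, norm_mul]
    exact mul_le_mul_of_nonneg_right e3 (norm_nonneg _)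
  have hgm : AEStronglyMeasurable g (volume.restrict (Set.Icc (x 0) (x (Fin.last N)))) :=
    (Lp.aestronglyMeasurable h₁).sub (Lp.aestronglyMeasurable h₂)
  have hcore := core hN hx hΛ0 hgm hb (p := p)
  have hee : eLpNorm g p (volume.restrict (Set.Icc (x 0) (x (Fin.last N)))) = eLpNorm (⇑(h₁ - h₂)) p (volume.restrict (Set.Icc (x 0) (x (Fin.last N)))) :=
    (eLpNorm_congr_ae (Lp.coeFn_sub h₁ h₂)).symm
  have hfin : eLpNorm g p (volume.restrict (Set.Icc (x 0) (x (Fin.last N)))) ≠ ∞ := by rw [hee]; exact (Lp.eLpNorm_lt_top _).ne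
  have h0 : eLpNorm g p (volume.restrict (Set.Icc (x 0) (x (Fin.last N)))) = 0 := by
    by_contra hne
    have hlt : ENNReal.ofReal Λ * eLpNorm g p (volume.restrict (Set.Icc (x 0) (x (Fin.last N)))) < 1 * eLpNorm g p (volume.restrict (Set.Icc (x 0) (x (Fin.last N)))) :=
      (ENNReal.mul_lt_mul_iff_left hne hfin).2 (by
        rw [← ENNReal.ofReal_one]
        exact ENNReal.ofReal_lt_ofReal_iff_of_nonneg hΛ0 |>.2 hΛ)
    rw [one_mul] at hlt
    exact absurd hcore (not_le.2 hlt)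
  have hsub : (h₁ - h₂ : Lp ℝ p (volume.restrict (Set.Icc (x 0) (x (Fin.last N))))) = 0 := by
    have : ‖h₁ - h₂‖ = 0 := by rw [Lp.norm_def, ← hee, h0, ENNReal.toReal_zero]
    exact norm_eq_zero.1 this
  exact sub_eq_zero.1 hsub
end FCAux

open FCAux in
/-- Fractal convolution `P(f,b) = f *_T b` is linear and bounded,
with `‖f *_T b‖_p ≤ (1/(1−Λ))(‖f‖_p + ‖b‖_p)`; hence its operator norm with respect
to the product norm `‖(f,b)‖ = ‖f‖_p + ‖b‖_p` is at most `1/(1−Λ)`. -/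
theorem fractal_convolution_linear_and_bounded
    (N : ℕ) (hN : 2 ≤ N) (x : Fin (N + 1) → ℝ) (hx : StrictMono x)
    (μ : Measure ℝ) (hμ : μ = volume.restrict (Set.Icc (x 0) (x (Fin.last N))))
    (p : ℝ≥0∞) [Fact (1 ≤ p)]
    (α : Fin N → Lp ℝ ∞ μ)
    (Λ : ℝ) (hΛdef : Λ = ⨆ n : Fin N, ‖α n‖) (hΛ : Λ < 1)
    (P : Lp ℝ p μ → Lp ℝ p μ → Lp ℝ p μ)
    (hP : ∀ f b : Lp ℝ p μ, SelfRef μ x (fun n => ⇑(α n)) ⇑f ⇑b ⇑(P f b)) :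
    (∀ (f f' b b' : Lp ℝ p μ) (γ : ℝ),
      P (γ • f + f') (γ • b + b') = γ • P f b + P f' b') ∧
    (∀ f b : Lp ℝ p μ, ‖P f b‖ ≤ 1 / (1 - Λ) * (‖f‖ + ‖b‖)) := by
  subst hμ
  have hN0 : 0 < N := by omega
  have hbdd : BddAbove (Set.range fun n : Fin N => ‖α n‖) :=
    Set.Finite.bddAbove (Set.finite_range _)
  have hle : ∀ n, ‖α n‖ ≤ Λ := fun n => hΛdef ▸ le_ciSup hbdd n
  have hΛ0 : 0 ≤ Λ := le_trans (norm_nonneg (α ⟨0, hN0⟩)) (hle _)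
  have hα : ∀ n, ∀ᵐ s ∂(volume.restrict (Set.Icc (x 0) (x (Fin.last N)))),
      ‖(α n : ℝ → ℝ) s‖ ≤ Λ := by
    intro n
    filter_upwards [ae_le_eLpNormEssSup (f := ⇑(α n))
      (μ := volume.restrict (Set.Icc (x 0) (x (Fin.last N))))] with s hs
    have hne : eLpNormEssSup (⇑(α n)) (volume.restrict (Set.Icc (x 0) (x (Fin.last N)))) ≠ ∞ := by
      rw [← eLpNorm_exponent_top]; exact (Lp.eLpNorm_lt_top (α n)).ne
    have h1 : ‖(α n : ℝ → ℝ) s‖ ≤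
        (eLpNormEssSup (⇑(α n)) (volume.restrict (Set.Icc (x 0) (x (Fin.last N))))).toReal := by
      calc ‖(α n : ℝ → ℝ) s‖ = ((‖(α n : ℝ → ℝ) s‖₊ : ℝ≥0∞)).toReal := by simp
        _ ≤ _ := ENNReal.toReal_mono hne hs
    refine h1.trans (le_trans (le_of_eq ?_) (hle n))
    rw [Lp.norm_def, eLpNorm_exponent_top]
  constructor
  · intro f f' b b' γ
    refine uniq hN0 hx hΛ0 hΛ hα _ _ (hP _ _) ?_
    intro n
    apply unres hx n
    have c1 : ∀ᵐ t ∂(volume.restrict (Set.Icc (x 0) (x (Fin.last N)))),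
        (⇑(γ • P f b + P f' b') : ℝ → ℝ) t = γ * (P f b) t + (P f' b') t := by
      filter_upwards [Lp.coeFn_add (γ • P f b) (P f' b'), Lp.coeFn_smul γ (P f b)] with t e1 e2
      rw [e1, Pi.add_apply, e2, Pi.smul_apply, smul_eq_mul]
    have c2 : ∀ᵐ t ∂(volume.restrict (Set.Icc (x 0) (x (Fin.last N)))),
        (⇑(γ • b + b') : ℝ → ℝ) t = γ * b t + b' t := by
      filter_upwards [Lp.coeFn_add (γ • b) b', Lp.coeFn_smul γ b] with t e1 e2
      rw [e1, Pi.add_apply, e2, Pi.smul_apply, smul_eq_mul]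
    have c3 : ∀ᵐ t ∂(volume.restrict (Set.Icc (x 0) (x (Fin.last N)))),
        (⇑(γ • f + f') : ℝ → ℝ) t = γ * f t + f' t := by
      filter_upwards [Lp.coeFn_add (γ • f) f', Lp.coeFn_smul γ f] with t e1 e2
      rw [e1, Pi.add_apply, e2, Pi.smul_apply, smul_eq_mul]
    filter_upwards [res hx n (hP f b n), res hx n (hP f' b' n),
      ae_mono (Measure.restrict_mono (subInt_subset hx n) le_rfl) c1, pullback_ae hN0 hx n c1,
      pullback_ae hN0 hx n c2, ae_mono (Measure.restrict_mono (subInt_subset hx n) le_rfl) c3]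
      with t a1 a2 b1 b2 b3 b4
    rw [b1, b2, b3, b4, a1, a2]
    ring
  · intro f b
    set r : ℝ → ℝ := fun t => (P f b) t - f t with hr
    set gg : ℝ → ℝ := fun t => (P f b) t - b t with hgg
    have hbr : ∀ n : Fin N, ∀ᵐ t ∂(volume.restrict (subInt x n)),
        ‖r t‖ ≤ Λ * ‖gg (Linv x n t)‖ := by
      intro n
      filter_upwards [res hx n (hP f b n), pullback_ae hN0 hx n (hα n)] with t e1 e3
      have : r t = (α n : ℝ → ℝ) (Linv x n t) * gg (Linv x n t) := by
        simp only [hr, hgg]; rw [e1]; ring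
      rw [this, norm_mul]
      exact mul_le_mul_of_nonneg_right e3 (norm_nonneg _)
    have hggm : AEStronglyMeasurable gg (volume.restrict (Set.Icc (x 0) (x (Fin.last N)))) :=
      (Lp.aestronglyMeasurable (P f b)).sub (Lp.aestronglyMeasurable b)
    have hcore := core hN0 hx hΛ0 hggm hbr (p := p)
    have hAf : eLpNorm (⇑(P f b)) p (volume.restrict (Set.Icc (x 0) (x (Fin.last N)))) ≠ ∞ := (Lp.eLpNorm_lt_top _).ne
    have hFf : eLpNorm (⇑f) p (volume.restrict (Set.Icc (x 0) (x (Fin.last N)))) ≠ ∞ := (Lp.eLpNorm_lt_top _).ne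
    have hBf : eLpNorm (⇑b) p (volume.restrict (Set.Icc (x 0) (x (Fin.last N)))) ≠ ∞ := (Lp.eLpNorm_lt_top _).ne
    have hgb : eLpNorm gg p (volume.restrict (Set.Icc (x 0) (x (Fin.last N)))) ≤ eLpNorm (⇑(P f b)) p (volume.restrict (Set.Icc (x 0) (x (Fin.last N)))) + eLpNorm (⇑b) p (volume.restrict (Set.Icc (x 0) (x (Fin.last N)))) :=
      eLpNorm_sub_le (Lp.aestronglyMeasurable (P f b)) (Lp.aestronglyMeasurable b) Fact.out
    have hsplit : (⇑(P f b) : ℝ → ℝ) = ⇑f + r := by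
      funext t; simp only [hr, Pi.add_apply]; ring
    have hrm : AEStronglyMeasurable r (volume.restrict (Set.Icc (x 0) (x (Fin.last N)))) :=
      (Lp.aestronglyMeasurable (P f b)).sub (Lp.aestronglyMeasurable f)
    have hmain : eLpNorm (⇑(P f b)) p (volume.restrict (Set.Icc (x 0) (x (Fin.last N)))) ≤ eLpNorm (⇑f) p (volume.restrict (Set.Icc (x 0) (x (Fin.last N)))) +
        ENNReal.ofReal Λ * (eLpNorm (⇑(P f b)) p (volume.restrict (Set.Icc (x 0) (x (Fin.last N)))) + eLpNorm (⇑b) p (volume.restrict (Set.Icc (x 0) (x (Fin.last N))))) := by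
      calc eLpNorm (⇑(P f b)) p (volume.restrict (Set.Icc (x 0) (x (Fin.last N)))) = eLpNorm (⇑f + r) p (volume.restrict (Set.Icc (x 0) (x (Fin.last N)))) := by rw [hsplit]
        _ ≤ eLpNorm (⇑f) p (volume.restrict (Set.Icc (x 0) (x (Fin.last N)))) + eLpNorm r p (volume.restrict (Set.Icc (x 0) (x (Fin.last N)))) :=
          eLpNorm_add_le (Lp.aestronglyMeasurable f) hrm Fact.out
        _ ≤ eLpNorm (⇑f) p (volume.restrict (Set.Icc (x 0) (x (Fin.last N)))) + ENNReal.ofReal Λ * eLpNorm gg p (volume.restrict (Set.Icc (x 0) (x (Fin.last N)))) :=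
          add_le_add_right hcore _
        _ ≤ _ := add_le_add_right (mul_le_mul_right hgb _) _
    have hRHSne : eLpNorm (⇑f) p (volume.restrict (Set.Icc (x 0) (x (Fin.last N)))) +
        ENNReal.ofReal Λ * (eLpNorm (⇑(P f b)) p (volume.restrict (Set.Icc (x 0) (x (Fin.last N)))) + eLpNorm (⇑b) p (volume.restrict (Set.Icc (x 0) (x (Fin.last N))))) ≠ ∞ := by
      apply ENNReal.add_ne_top.2
      refine ⟨hFf, ENNReal.mul_ne_top ENNReal.ofReal_ne_top (ENNReal.add_ne_top.2 ⟨hAf, hBf⟩)⟩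
    have hreal : ‖P f b‖ ≤ ‖f‖ + Λ * (‖P f b‖ + ‖b‖) := by
      have h2 := ENNReal.toReal_mono hRHSne hmain
      rw [ENNReal.toReal_add hFf (ENNReal.mul_ne_top ENNReal.ofReal_ne_top
          (ENNReal.add_ne_top.2 ⟨hAf, hBf⟩)), ENNReal.toReal_mul,
        ENNReal.toReal_ofReal hΛ0, ENNReal.toReal_add hAf hBf] at h2
      simpa [Lp.norm_def] using h2
    have h1Λ : 0 < 1 - Λ := by linarith
    rw [div_mul_eq_mul_div, one_mul, le_div_iff₀ h1Λ]
    have hbn : 0 ≤ ‖b‖ := norm_nonneg _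
    nlinarith [hreal, norm_nonneg (P f b)]
end
end

section
/- Let f, b : I → ℝ be bounded functions, let f̃ : I → ℝ be the unique bounded function satisfying f̃(x) = f(x) + α_n(L_n^{−1}(x))·(f̃ − b)(L_n^{−1}(x)) for every x ∈ I_n and every n = 1,…,N, and let ε ≥ 0. If max{|f(x₀) − b(x₀)|, |f(x_N) − b(x_N)|} ≤ ε(1 − Λ), then sup{|f̃(x_n) − f(x_n)| : n = 0, 1, …, N} ≤ ε. -/
open MeasureTheory ENNReal

noncomputable section

/-- If `max{|f(x₀) − b(x₀)|, |f(x_N) − b(x_N)|} ≤ ε(1 − Λ)`, then the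
fractal convolution `f̃` (the unique bounded solution of the self-referential
equation) satisfies `|f̃(xₙ) − f(xₙ)| ≤ ε` at every node of the partition. -/
theorem fractal_convolution_close_at_nodes
    (N : ℕ) (hN : 2 ≤ N) (x : Fin (N + 1) → ℝ) (hx : StrictMono x)
    (α : Fin N → ℝ → ℝ)
    (hαbdd : ∀ n : Fin N,
      BddAbove (Set.range fun t : Set.Icc (x 0) (x (Fin.last N)) => |α n t|))
    (Λ : ℝ)
    (hΛdef : Λ = ⨆ n : Fin N, ⨆ t : Set.Icc (x 0) (x (Fin.last N)), |α n t|)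
    (hΛ : Λ < 1)
    (f b ft : ℝ → ℝ)
    (hf : Bornology.IsBounded (f '' Set.Icc (x 0) (x (Fin.last N))))
    (hb : Bornology.IsBounded (b '' Set.Icc (x 0) (x (Fin.last N))))
    (hft : Bornology.IsBounded (ft '' Set.Icc (x 0) (x (Fin.last N))))
    (hfix : ∀ n : Fin N, ∀ t ∈ subInt x n,
      ft t = f t + α n (Linv x n t) * (ft (Linv x n t) - b (Linv x n t)))
    (huniq : ∀ g : ℝ → ℝ, Bornology.IsBounded (g '' Set.Icc (x 0) (x (Fin.last N))) →
      (∀ n : Fin N, ∀ t ∈ subInt x n,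
        g t = f t + α n (Linv x n t) * (g (Linv x n t) - b (Linv x n t))) →
      ∀ t ∈ Set.Icc (x 0) (x (Fin.last N)), g t = ft t)
    (ε : ℝ) (hε : 0 ≤ ε)
    (hend : max |f (x 0) - b (x 0)| |f (x (Fin.last N)) - b (x (Fin.last N))|
      ≤ ε * (1 - Λ)) :
    ∀ n : Fin (N + 1), |ft (x n) - f (x n)| ≤ ε := by

  have hNZ : NeZero N := ⟨by omega⟩
  have hlastpos : (0 : Fin (N+1)) < Fin.last N := by
    rw [Fin.lt_def]; simp; omega
  have hx0N : x 0 < x (Fin.last N) := hx hlastpos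
  have hx0mem : x 0 ∈ Set.Icc (x 0) (x (Fin.last N)) := ⟨le_refl _, hx0N.le⟩
  have hxNmem : x (Fin.last N) ∈ Set.Icc (x 0) (x (Fin.last N)) := ⟨hx0N.le, le_refl _⟩
  -- every |α n t| is at most Λ
  have hΛge : ∀ n : Fin N, ∀ t ∈ Set.Icc (x 0) (x (Fin.last N)), |α n t| ≤ Λ := by
    intro n t ht
    rw [hΛdef]
    have h1 : |α n t| ≤ ⨆ s : Set.Icc (x 0) (x (Fin.last N)), |α n (s : ℝ)| :=
      le_ciSup (hαbdd n) ⟨t, ht⟩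
    exact h1.trans (le_ciSup
      (f := fun m : Fin N => ⨆ s : Set.Icc (x 0) (x (Fin.last N)), |α m (s : ℝ)|)
      (Set.Finite.bddAbove (Set.finite_range _)) n)
  have hΛ0 : 0 ≤ Λ :=
    le_trans (abs_nonneg _) (hΛge ⟨0, by omega⟩ (x 0) hx0mem)
  have hdenom : ∀ m : Fin N, x m.succ - x m.castSucc ≠ 0 := fun m =>
    ne_of_gt (sub_pos.mpr (hx ((Fin.castSucc_lt_succ : m.castSucc < m.succ))))
  have hLinv_succ : ∀ m : Fin N, Linv x m (x m.succ) = x (Fin.last N) := by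
    intro m
    unfold Linv
    rw [mul_div_cancel_left₀ _ (hdenom m)]
    ring
  have hcs : ((0 : Fin N).castSucc : Fin (N+1)) = 0 := Fin.ext (by simp)
  have hLinv_zero : Linv x (0 : Fin N) (x 0) = x 0 := by
    unfold Linv
    rw [hcs]
    simp
  have hmem_succ : ∀ m : Fin N, x m.succ ∈ subInt x m := by
    intro m
    unfold subInt
    split
    · exact ⟨(hx ((Fin.castSucc_lt_succ : m.castSucc < m.succ))).le, le_refl _⟩
    · exact ⟨hx ((Fin.castSucc_lt_succ : m.castSucc < m.succ)), le_refl _⟩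
  have hmem_zero : x 0 ∈ subInt x (0 : Fin N) := by
    unfold subInt
    rw [if_pos (Fin.val_zero N)]
    refine ⟨?_, ?_⟩
    · rw [hcs]
    · rw [← hcs]
      exact (hx ((Fin.castSucc_lt_succ : (0 : Fin N).castSucc < (0 : Fin N).succ))).le
  -- endpoint bounds
  have e0 : |f (x 0) - b (x 0)| ≤ ε * (1 - Λ) := le_trans (le_max_left _ _) hend
  have eN : |f (x (Fin.last N)) - b (x (Fin.last N))| ≤ ε * (1 - Λ) :=
    le_trans (le_max_right _ _) hend
  have key : ∀ (t : ℝ), t ∈ Set.Icc (x 0) (x (Fin.last N)) →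
      (∃ m : Fin N, ft t = f t + α m t * (ft t - b t)) →
      |f t - b t| ≤ ε * (1 - Λ) → |ft t - f t| ≤ Λ * ε := by
    rintro t ht ⟨m, heq⟩ he
    have hα := hΛge m t ht
    have h1 : ft t - f t = α m t * (ft t - b t) := by linarith
    have h2 : |ft t - f t| = |α m t| * |ft t - b t| := by rw [h1, abs_mul]
    have h3 : |ft t - b t| ≤ |ft t - f t| + |f t - b t| := by
      have := abs_sub_le (ft t) (f t) (b t); linarith
    have h4 : |ft t - f t| ≤ Λ * (|ft t - f t| + |f t - b t|) :=
      calc |ft t - f t| = |α m t| * |ft t - b t| := h2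
        _ ≤ Λ * (|ft t - f t| + |f t - b t|) := mul_le_mul hα h3 (abs_nonneg _) hΛ0
    nlinarith [abs_nonneg (ft t - f t), abs_nonneg (f t - b t),
      mul_le_mul_of_nonneg_left he hΛ0]
  have hD0 : |ft (x 0) - f (x 0)| ≤ Λ * ε := by
    refine key (x 0) hx0mem ⟨(0 : Fin N), ?_⟩ e0
    have := hfix (0 : Fin N) (x 0) hmem_zero
    rwa [hLinv_zero] at this
  have mlast : Fin N := ⟨N - 1, by omega⟩
  have hmsucc : (⟨N - 1, by omega⟩ : Fin N).succ = Fin.last N := by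
    apply Fin.ext; simp; omega
  have hDN : |ft (x (Fin.last N)) - f (x (Fin.last N))| ≤ Λ * ε := by
    refine key (x (Fin.last N)) hxNmem ⟨(⟨N - 1, by omega⟩ : Fin N), ?_⟩ eN
    have := hfix (⟨N - 1, by omega⟩ : Fin N) _ (hmem_succ ⟨N - 1, by omega⟩)
    rwa [hLinv_succ, hmsucc] at this
  have hΛεε : Λ * ε ≤ ε := by nlinarith
  intro n
  induction n using Fin.cases with
  | zero => exact hD0.trans hΛεε
  | succ m =>
    have heq := hfix m (x m.succ) (hmem_succ m)
    rw [hLinv_succ m] at heq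
    have h1 : ft (x m.succ) - f (x m.succ)
        = α m (x (Fin.last N)) * (ft (x (Fin.last N)) - b (x (Fin.last N))) := by
      linarith
    have hα := hΛge m (x (Fin.last N)) hxNmem
    have h3 : |ft (x (Fin.last N)) - b (x (Fin.last N))| ≤ ε := by
      have := abs_sub_le (ft (x (Fin.last N))) (f (x (Fin.last N))) (b (x (Fin.last N)))
      nlinarith
    calc |ft (x m.succ) - f (x m.succ)|
        = |α m (x (Fin.last N))| * |ft (x (Fin.last N)) - b (x (Fin.last N))| := by
          rw [h1, abs_mul]
      _ ≤ Λ * ε := mul_le_mul hα h3 (abs_nonneg _) hΛ0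
      _ ≤ ε := hΛεε


end
end

section
/- For all f, b ∈ L^p(I) with 1 ≤ p ≤ ∞, the distance between f and its fractal convolution with b satisfies ‖(f *_T b) − f‖_p ≤ (Λ/(1−Λ)) ‖f − b‖_p. -/
open MeasureTheory ENNReal

noncomputable section

section Aux
variable {N : ℕ} {x : Fin (N + 1) → ℝ} (hx : StrictMono x)

lemma subInt_measurable (n : Fin N) : MeasurableSet (subInt x n) := by
  unfold subInt; split <;> measurability

lemma Ioc_subset_subInt (n : Fin N) :
    Set.Ioc (x n.castSucc) (x n.succ) ⊆ subInt x n := by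
  unfold subInt; split
  · exact Set.Ioc_subset_Icc_self
  · exact subset_rfl

include hx in
lemma subInt_subset (n : Fin N) :
    subInt x n ⊆ Set.Icc (x 0) (x (Fin.last N)) := by
  have h1 : x 0 ≤ x n.castSucc := hx.monotone (Fin.zero_le _)
  have h2 : x n.succ ≤ x (Fin.last N) := hx.monotone (Fin.le_last _)
  unfold subInt; split
  · exact fun t ht => ⟨h1.trans ht.1, ht.2.trans h2⟩
  · exact fun t ht => ⟨h1.trans ht.1.le, ht.2.trans h2⟩

include hx in
lemma iUnion_subInt (hN : 1 ≤ N) :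
    (⋃ n : Fin N, subInt x n) = Set.Icc (x 0) (x (Fin.last N)) := by
  apply Set.Subset.antisymm
  · exact Set.iUnion_subset fun n => subInt_subset hx n
  · intro t ht
    rcases eq_or_lt_of_le ht.1 with h0 | h0
    · -- t = x 0, belongs to subInt ⟨0, _⟩
      refine Set.mem_iUnion.2 ⟨⟨0, hN⟩, ?_⟩
      have : subInt x ⟨0, hN⟩ = Set.Icc (x (Fin.castSucc ⟨0, hN⟩)) (x (Fin.succ ⟨0, hN⟩)) := by
        unfold subInt; simp
      rw [this]
      constructor
      · rw [show Fin.castSucc (⟨0, hN⟩ : Fin N) = 0 from rfl]; exact h0.le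
      · rw [show Fin.castSucc (⟨0, hN⟩ : Fin N) = 0 from rfl] at *
        exact le_of_lt (lt_of_le_of_lt (le_of_eq h0.symm) (hx (by
          simp [Fin.lt_def])))
    · -- x 0 < t ≤ x last : take the largest k with x k < t
      classical
      set s : Finset (Fin (N + 1)) := Finset.univ.filter (fun m => x m < t) with hs
      have hne : s.Nonempty := ⟨0, by simp [hs, h0]⟩
      set k := s.max' hne with hk
      have hkmem : x k < t := by
        have := s.max'_mem hne
        simpa [hs] using this
      have hklast : k ≠ Fin.last N := by
        intro h
        rw [h] at hkmem
        exact absurd ht.2 (not_le.2 hkmem)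
      have hkval : k.val < N := by
        rcases lt_or_eq_of_le (Nat.lt_succ_iff.1 k.isLt) with h | h
        · exact h
        · exact absurd (Fin.ext h) hklast
      set n : Fin N := ⟨k.val, hkval⟩ with hn
      have hcs : n.castSucc = k := rfl
      have hle : t ≤ x n.succ := by
        by_contra hlt
        push_neg at hlt
        have hmem : n.succ ∈ s := by simp [hs, hlt]
        have := s.le_max' _ hmem
        rw [← hk] at this
        have : n.succ ≤ n.castSucc := by rw [hcs]; exact this
        exact absurd this (not_le.2 (Fin.castSucc_lt_succ : n.castSucc < n.succ))
      exact Set.mem_iUnion.2 ⟨n, Ioc_subset_subInt n ⟨by rw [hcs]; exact hkmem, hle⟩⟩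

include hx in
lemma subInt_disjoint : Pairwise (Function.onFun Disjoint (subInt x)) := by
  have key : ∀ m n : Fin N, m < n → Disjoint (subInt x m) (subInt x n) := by
    intro m n hmn
    rw [Set.disjoint_left]
    intro t htm htn
    have hmn' : m.val < n.val := hmn
    have hnz : n.val ≠ 0 := by omega
    have htn' : x n.castSucc < t := by
      have : subInt x n = Set.Ioc (x n.castSucc) (x n.succ) := by unfold subInt; simp [hnz]
      rw [this] at htn; exact htn.1
    have htm' : t ≤ x m.succ := by
      unfold subInt at htm; split at htm
      · exact htm.2
      · exact htm.2
    have : x m.succ ≤ x n.castSucc := hx.monotone (by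
      simp only [Fin.le_def, Fin.val_succ, Fin.coe_castSucc]
      exact hmn)
    linarith
  intro m n hmn
  rcases lt_or_gt_of_ne hmn with h | h
  · exact key m n h
  · exact (key n m h).symm

end Aux
section Aux2
variable {N : ℕ} {x : Fin (N + 1) → ℝ} (hx : StrictMono x)

include hx in
lemma c_pos (hN : 1 ≤ N) : 0 < x (Fin.last N) - x 0 :=
  sub_pos.2 (hx (by rw [Fin.lt_def]; simp; omega))

include hx in
lemma d_pos (n : Fin N) : 0 < x n.succ - x n.castSucc :=
  sub_pos.2 (hx (Fin.castSucc_lt_succ : n.castSucc < n.succ))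

lemma Linv_affine (n : Fin N) :
    Linv x n = fun t =>
      ((x (Fin.last N) - x 0) / (x n.succ - x n.castSucc)) * t +
      (x 0 - x n.castSucc * ((x (Fin.last N) - x 0) / (x n.succ - x n.castSucc))) := by
  funext t; unfold Linv; ring

include hx in
lemma Linv_strictMono (hN : 1 ≤ N) (n : Fin N) : StrictMono (Linv x n) := by
  have hc := c_pos hx hN
  have hd := d_pos hx n
  intro a b hab
  rw [Linv_affine]
  have hs : 0 < (x (Fin.last N) - x 0) / (x n.succ - x n.castSucc) := div_pos hc hd
  simp only
  nlinarith

include hx in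
lemma Linv_embedding (hN : 1 ≤ N) (n : Fin N) : MeasurableEmbedding (Linv x n) := by
  have hd := (d_pos hx n).ne'
  have hs : (x (Fin.last N) - x 0) / (x n.succ - x n.castSucc) ≠ 0 :=
    (div_pos (c_pos hx hN) (d_pos hx n)).ne'
  have : Linv x n = ⇑((Homeomorph.mulLeft₀ _ hs).trans
      (Homeomorph.addRight (x 0 - x n.castSucc * ((x (Fin.last N) - x 0) / (x n.succ - x n.castSucc))))) := by
    rw [Linv_affine]; rfl
  rw [this]
  exact (Homeomorph.measurableEmbedding _)

include hx in
lemma Linv_left (n : Fin N) : Linv x n (x n.castSucc) = x 0 := by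
  unfold Linv; field_simp; simp

include hx in
lemma Linv_right (n : Fin N) : Linv x n (x n.succ) = x (Fin.last N) := by
  have hd := (d_pos hx n).ne'
  unfold Linv; field_simp; ring

include hx in
lemma Linv_preimage_Ioc (hN : 1 ≤ N) (n : Fin N) :
    Linv x n ⁻¹' Set.Ioc (x 0) (x (Fin.last N)) = Set.Ioc (x n.castSucc) (x n.succ) := by
  have hsm := Linv_strictMono hx hN n
  ext t
  simp only [Set.mem_preimage, Set.mem_Ioc]
  rw [← Linv_left hx n, ← Linv_right hx n, hsm.lt_iff_lt, hsm.le_iff_le]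

include hx in
lemma Linv_preimage_Icc (hN : 1 ≤ N) (n : Fin N) :
    Linv x n ⁻¹' Set.Icc (x 0) (x (Fin.last N)) = Set.Icc (x n.castSucc) (x n.succ) := by
  have hsm := Linv_strictMono hx hN n
  ext t
  simp only [Set.mem_preimage, Set.mem_Icc]
  rw [← Linv_left hx n, ← Linv_right hx n, hsm.le_iff_le, hsm.le_iff_le]

include hx in
lemma Linv_map_volume (hN : 1 ≤ N) (n : Fin N) :
    Measure.map (Linv x n) volume =
      ENNReal.ofReal ((x n.succ - x n.castSucc) / (x (Fin.last N) - x 0)) • volume := by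
  have hc := c_pos hx hN
  have hd := d_pos hx n
  set s := (x (Fin.last N) - x 0) / (x n.succ - x n.castSucc) with hsdef
  have hs : 0 < s := div_pos hc hd
  set k := x 0 - x n.castSucc * s with hkdef
  have h1 : Linv x n = (fun u => u + k) ∘ (fun t => s * t) := by
    rw [Linv_affine]; funext t; simp [Function.comp]; rfl
  rw [h1, ← Measure.map_map (measurable_add_const k) (measurable_const_mul s),
    Real.map_volume_mul_left hs.ne', Measure.map_smul,
    (measurePreserving_add_right volume k).map_eq]
  congr 1
  rw [abs_of_pos (inv_pos.2 hs), hsdef, inv_div]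

include hx in
lemma Linv_map_restrict (hN : 1 ≤ N) (n : Fin N) :
    Measure.map (Linv x n) (volume.restrict (subInt x n)) =
      ENNReal.ofReal ((x n.succ - x n.castSucc) / (x (Fin.last N) - x 0)) •
        volume.restrict (Set.Icc (x 0) (x (Fin.last N))) := by
  have hmeas : Measurable (Linv x n) := (Linv_embedding hx hN n).measurable
  by_cases h0 : n.val = 0
  · have : subInt x n = Linv x n ⁻¹' Set.Icc (x 0) (x (Fin.last N)) := by
      rw [Linv_preimage_Icc hx hN n]; unfold subInt; simp [h0]
    rw [this, ← Measure.restrict_map hmeas measurableSet_Icc, Linv_map_volume hx hN n,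
      Measure.restrict_smul]
  · have : subInt x n = Linv x n ⁻¹' Set.Ioc (x 0) (x (Fin.last N)) := by
      rw [Linv_preimage_Ioc hx hN n]; unfold subInt; simp [h0]
    rw [this, ← Measure.restrict_map hmeas measurableSet_Ioc, Linv_map_volume hx hN n,
      Measure.restrict_smul, Measure.restrict_congr_set Ioc_ae_eq_Icc]

end Aux2
section Tel
variable {N : ℕ} {x : Fin (N + 1) → ℝ}

lemma telescoping : ∑ n : Fin N, (x n.succ - x n.castSucc) = x (Fin.last N) - x 0 := by
  set f : ℕ → ℝ := fun i => x ⟨min i N, Nat.lt_succ_of_le (min_le_right i N)⟩ with hf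
  have h1 : ∀ n : Fin N, x n.succ - x n.castSucc = f (n.val + 1) - f n.val := by
    intro n
    have e1 : n.succ = (⟨min (n.val + 1) N, Nat.lt_succ_of_le (min_le_right _ N)⟩ : Fin (N + 1)) := by
      apply Fin.ext; simp [Nat.min_eq_left (Nat.succ_le_of_lt n.isLt)]
    have e2 : n.castSucc = (⟨min n.val N, Nat.lt_succ_of_le (min_le_right _ N)⟩ : Fin (N + 1)) := by
      apply Fin.ext; simp [Nat.min_eq_left (le_of_lt n.isLt)]
    rw [hf]; rw [e1, e2]
  calc ∑ n : Fin N, (x n.succ - x n.castSucc)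
      = ∑ n : Fin N, (f (n.val + 1) - f n.val) := by
        exact Finset.sum_congr rfl fun n _ => h1 n
    _ = ∑ i ∈ Finset.range N, (f (i + 1) - f i) :=
        Fin.sum_univ_eq_sum_range (fun i => f (i + 1) - f i) N
    _ = f N - f 0 := Finset.sum_range_sub f N
    _ = x (Fin.last N) - x 0 := by
        rw [hf]; simp only [Nat.min_self, Nat.min_eq_left (Nat.zero_le N)]
        congr 1

end Tel

section Key
variable {N : ℕ} {x : Fin (N + 1) → ℝ}

lemma key_estimate (hx : StrictMono x) (hN : 1 ≤ N)
    {μ : Measure ℝ} (hμ : μ = volume.restrict (Set.Icc (x 0) (x (Fin.last N))))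
    {p : ℝ≥0∞} (hp : 1 ≤ p)
    (α : Fin N → ℝ → ℝ) {Λ' : ℝ≥0∞} (hΛtop : Λ' ≠ ⊤)
    (hα : ∀ n, ∀ᵐ u ∂μ, (‖α n u‖₊ : ℝ≥0∞) ≤ Λ')
    (G H : ℝ → ℝ)
    (hG : ∀ n : Fin N, ∀ᵐ t ∂(volume.restrict (subInt x n)),
      G t = α n (Linv x n t) * H (Linv x n t)) :
    eLpNorm G p μ ≤ Λ' * eLpNorm H p μ := by
  have hp0 : p ≠ 0 := (lt_of_lt_of_le one_pos hp).ne'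
  -- the weights
  set a : Fin N → ℝ≥0∞ :=
    fun n => ENNReal.ofReal ((x n.succ - x n.castSucc) / (x (Fin.last N) - x 0)) with ha
  have hc := c_pos hx hN
  have hsum : ∑' n : Fin N, a n = 1 := by
    rw [tsum_fintype, ha]
    rw [← ENNReal.ofReal_sum_of_nonneg
      (fun n _ => div_nonneg (d_pos hx n).le hc.le)]
    rw [← Finset.sum_div, telescoping, div_self hc.ne']
    exact ENNReal.ofReal_one
  -- decomposition of μ
  have hμsum : μ = Measure.sum (fun n : Fin N => volume.restrict (subInt x n)) := by
    rw [hμ, ← iUnion_subInt hx hN,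
      Measure.restrict_iUnion (subInt_disjoint hx) (fun n => subInt_measurable n)]
  -- pulled-back a.e. facts
  have hmap : ∀ n : Fin N,
      Measure.map (Linv x n) (volume.restrict (subInt x n)) = a n • μ := by
    intro n; rw [hμ, ha]; exact Linv_map_restrict hx hN n
  have hpull : ∀ n : Fin N, ∀ (P : ℝ → Prop), (∀ᵐ u ∂μ, P u) →
      ∀ᵐ t ∂(volume.restrict (subInt x n)), P (Linv x n t) := by
    intro n P hP
    have h1 : ∀ᵐ u ∂(a n • μ), P u := Measure.ae_smul_measure hP _
    rw [← hmap n] at h1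
    exact ((Linv_embedding hx hN n).ae_map_iff).1 h1
  by_cases hptop : p = ∞
  · -- p = ∞
    rw [hptop, eLpNorm_exponent_top, eLpNorm_exponent_top]
    set C := eLpNormEssSup H μ with hC
    refine essSup_le_of_ae_le _ ?_
    rw [hμsum, Filter.EventuallyLE, Measure.ae_sum_iff]
    intro n
    filter_upwards [hG n, hpull n _ (hα n),
      hpull n _ (MeasureTheory.ae_le_eLpNormEssSup (f := H) (μ := μ))] with t h1 h2 h3
    rw [h1]
    calc ((‖α n (Linv x n t) * H (Linv x n t)‖₊ : ℝ≥0∞))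
        = (‖α n (Linv x n t)‖₊ : ℝ≥0∞) * (‖H (Linv x n t)‖₊ : ℝ≥0∞) := by
          rw [nnnorm_mul, ENNReal.coe_mul]
      _ ≤ Λ' * C := mul_le_mul' h2 h3
  · -- p finite
    have hq : 0 < p.toReal := ENNReal.toReal_pos hp0 hptop
    set q := p.toReal with hqdef
    have hint : ∫⁻ t, (‖G t‖₊ : ℝ≥0∞) ^ q ∂μ ≤
        Λ' ^ q * ∫⁻ u, (‖H u‖₊ : ℝ≥0∞) ^ q ∂μ := by
      have hbound : ∀ n : Fin N, ∫⁻ t, (‖G t‖₊ : ℝ≥0∞) ^ q ∂(volume.restrict (subInt x n)) ≤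
          a n * (Λ' ^ q * ∫⁻ u, (‖H u‖₊ : ℝ≥0∞) ^ q ∂μ) := by
        intro n
        calc ∫⁻ t, (‖G t‖₊ : ℝ≥0∞) ^ q ∂(volume.restrict (subInt x n))
            ≤ ∫⁻ t, (Λ' * (‖H (Linv x n t)‖₊ : ℝ≥0∞)) ^ q ∂(volume.restrict (subInt x n)) := by
              apply lintegral_mono_ae
              filter_upwards [hG n, hpull n _ (hα n)] with t h1 h2
              apply ENNReal.rpow_le_rpow _ hq.le
              rw [h1, nnnorm_mul, ENNReal.coe_mul]
              exact mul_le_mul' h2 le_rfl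
          _ = Λ' ^ q * ∫⁻ t, (‖H (Linv x n t)‖₊ : ℝ≥0∞) ^ q ∂(volume.restrict (subInt x n)) := by
              rw [← lintegral_const_mul' _ _ (ENNReal.rpow_ne_top_of_nonneg hq.le hΛtop)]
              congr 1; funext t
              rw [ENNReal.mul_rpow_of_nonneg _ _ hq.le]
          _ = Λ' ^ q * ∫⁻ u, (‖H u‖₊ : ℝ≥0∞) ^ q
                ∂(Measure.map (Linv x n) (volume.restrict (subInt x n))) := by
              rw [(Linv_embedding hx hN n).lintegral_map]
          _ = a n * (Λ' ^ q * ∫⁻ u, (‖H u‖₊ : ℝ≥0∞) ^ q ∂μ) := by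
              rw [hmap n, lintegral_smul_measure]; ring
      calc ∫⁻ t, (‖G t‖₊ : ℝ≥0∞) ^ q ∂μ
          = ∑' n : Fin N, ∫⁻ t, (‖G t‖₊ : ℝ≥0∞) ^ q ∂(volume.restrict (subInt x n)) := by
            rw [hμsum, lintegral_sum_measure]
        _ ≤ ∑' n : Fin N, a n * (Λ' ^ q * ∫⁻ u, (‖H u‖₊ : ℝ≥0∞) ^ q ∂μ) :=
            ENNReal.tsum_le_tsum hbound
        _ = (∑' n : Fin N, a n) * (Λ' ^ q * ∫⁻ u, (‖H u‖₊ : ℝ≥0∞) ^ q ∂μ) :=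
            ENNReal.tsum_mul_right
        _ = Λ' ^ q * ∫⁻ u, (‖H u‖₊ : ℝ≥0∞) ^ q ∂μ := by rw [hsum, one_mul]
    rw [eLpNorm_eq_lintegral_rpow_enorm_toReal hp0 hptop, eLpNorm_eq_lintegral_rpow_enorm_toReal hp0 hptop]
    calc (∫⁻ t, (‖G t‖₊ : ℝ≥0∞) ^ q ∂μ) ^ (1 / q)
        ≤ (Λ' ^ q * ∫⁻ u, (‖H u‖₊ : ℝ≥0∞) ^ q ∂μ) ^ (1 / q) :=
          ENNReal.rpow_le_rpow hint (by positivity)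
      _ = Λ' * (∫⁻ u, (‖H u‖₊ : ℝ≥0∞) ^ q ∂μ) ^ (1 / q) := by
          rw [ENNReal.mul_rpow_of_nonneg _ _ (by positivity), ← ENNReal.rpow_mul,
            mul_one_div, div_self hq.ne', ENNReal.rpow_one]

end Key

/-- `‖(f *_T b) − f‖_p ≤ (Λ/(1−Λ)) ‖f − b‖_p`. -/
theorem fractal_convolution_distance_to_seed
    (N : ℕ) (hN : 2 ≤ N) (x : Fin (N + 1) → ℝ) (hx : StrictMono x)
    (μ : Measure ℝ) (hμ : μ = volume.restrict (Set.Icc (x 0) (x (Fin.last N))))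
    (p : ℝ≥0∞) [Fact (1 ≤ p)]
    (α : Fin N → Lp ℝ ∞ μ)
    (Λ : ℝ) (hΛdef : Λ = ⨆ n : Fin N, ‖α n‖) (hΛ : Λ < 1)
    (f b fb : Lp ℝ p μ)
    (hfb : SelfRef μ x (fun n => ⇑(α n)) ⇑f ⇑b ⇑fb) :
    ‖fb - f‖ ≤ Λ / (1 - Λ) * ‖f - b‖ := by
  have hN1 : 1 ≤ N := le_trans (by norm_num) hN
  have hp1 : (1 : ℝ≥0∞) ≤ p := Fact.out
  have hNe : Nonempty (Fin N) := ⟨⟨0, by omega⟩⟩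
  have hbdd : BddAbove (Set.range fun n : Fin N => ‖α n‖) :=
    Set.Finite.bddAbove (Set.finite_range _)
  have hΛle : ∀ n, ‖α n‖ ≤ Λ := by
    intro n; rw [hΛdef]; exact le_ciSup hbdd n
  have hΛ0 : 0 ≤ Λ := le_trans (norm_nonneg _) (hΛle hNe.some)
  have hα : ∀ n : Fin N, ∀ᵐ u ∂μ, (‖(α n) u‖₊ : ℝ≥0∞) ≤ ENNReal.ofReal Λ := by
    intro n
    filter_upwards [ae_le_eLpNormEssSup (f := ⇑(α n)) (μ := μ)] with u hu
    refine hu.trans ?_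
    have h2 : eLpNorm (⇑(α n)) ∞ μ ≤ ENNReal.ofReal Λ := by
      rw [← ENNReal.ofReal_toReal (Lp.eLpNorm_ne_top (α n))]
      exact ENNReal.ofReal_le_ofReal (by rw [← Lp.norm_def]; exact hΛle n)
    exact le_trans (le_of_eq (eLpNorm_exponent_top (f := ⇑(α n))).symm) h2
  have hrestr : ∀ n : Fin N, μ.restrict (subInt x n) = volume.restrict (subInt x n) := by
    intro n
    rw [hμ, Measure.restrict_restrict (subInt_measurable n),
      Set.inter_eq_left.2 (subInt_subset hx n)]
  have hG : ∀ n : Fin N, ∀ᵐ t ∂(volume.restrict (subInt x n)),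
      (⇑fb - ⇑f) t = (α n) (Linv x n t) * ((⇑fb - ⇑b) (Linv x n t)) := by
    intro n
    rw [← hrestr n]
    filter_upwards [ae_restrict_of_ae (hfb n), ae_restrict_mem (subInt_measurable n)]
      with t h1 h2
    simp only [Pi.sub_apply]
    rw [h1 h2]; ring
  have hkey : eLpNorm (⇑fb - ⇑f) p μ ≤ ENNReal.ofReal Λ * eLpNorm (⇑fb - ⇑b) p μ :=
    key_estimate hx hN1 hμ hp1 _ ENNReal.ofReal_ne_top hα _ _ hG
  have htri : eLpNorm (⇑fb - ⇑b) p μ ≤ eLpNorm (⇑fb - ⇑f) p μ + eLpNorm (⇑f - ⇑b) p μ := by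
    have heq : (⇑fb - ⇑b) = (⇑fb - ⇑f) + (⇑f - ⇑b) := by
      funext t; simp only [Pi.sub_apply, Pi.add_apply]; ring
    rw [heq]
    exact eLpNorm_add_le ((Lp.aestronglyMeasurable fb).sub (Lp.aestronglyMeasurable f))
      ((Lp.aestronglyMeasurable f).sub (Lp.aestronglyMeasurable b)) hp1
  have hA : eLpNorm (⇑fb - ⇑f) p μ ≠ ⊤ := by
    rw [← eLpNorm_congr_ae (Lp.coeFn_sub fb f)]; exact Lp.eLpNorm_ne_top _
  have hB : eLpNorm (⇑f - ⇑b) p μ ≠ ⊤ := by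
    rw [← eLpNorm_congr_ae (Lp.coeFn_sub f b)]; exact Lp.eLpNorm_ne_top _
  have hnormA : ‖fb - f‖ = (eLpNorm (⇑fb - ⇑f) p μ).toReal := by
    rw [Lp.norm_def, eLpNorm_congr_ae (Lp.coeFn_sub fb f)]
  have hnormB : ‖f - b‖ = (eLpNorm (⇑f - ⇑b) p μ).toReal := by
    rw [Lp.norm_def, eLpNorm_congr_ae (Lp.coeFn_sub f b)]
  set A := eLpNorm (⇑fb - ⇑f) p μ with hAdef
  set B := eLpNorm (⇑f - ⇑b) p μ with hBdef
  have h2 : A ≤ ENNReal.ofReal Λ * (A + B) := hkey.trans (mul_le_mul' le_rfl htri)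
  have h3 : A.toReal ≤ Λ * (A.toReal + B.toReal) := by
    have h4 := ENNReal.toReal_mono
      (ENNReal.mul_ne_top ENNReal.ofReal_ne_top (ENNReal.add_ne_top.2 ⟨hA, hB⟩)) h2
    rwa [ENNReal.toReal_mul, ENNReal.toReal_ofReal hΛ0, ENNReal.toReal_add hA hB] at h4
  rw [hnormA, hnormB]
  rw [div_mul_eq_mul_div, le_div_iff₀ (by linarith)]
  nlinarith [ENNReal.toReal_nonneg (a := B)]

end
end

section
/- For 0 < p < 1, equip L^p(I) with the translation-invariant metric d_p(g,h) = ∫_I |g(x) − h(x)|^p dx. For all f, b ∈ L^p(I), the fractal convolution f *_T b (the unique fixed point of T_{f,b}, which is a contraction on (L^p(I), d_p) with contraction factor Λ^p) satisfies d_p(f *_T b, f) ≤ (Λ^p/(1−Λ^p)) d_p(f, b). -/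
open MeasureTheory ENNReal

noncomputable section

namespace FCaux

open Set

lemma map_affine (m k : ℝ) (hm : m ≠ 0) :
    Measure.map (fun t : ℝ => m * t + k) volume = ENNReal.ofReal |m⁻¹| • volume := by
  have h : (fun t : ℝ => m * t + k) = (fun t : ℝ => t + k) ∘ (fun t : ℝ => m * t) := rfl
  rw [h, ← Measure.map_map (measurable_add_const k) (measurable_const_mul m),
    Real.map_volume_mul_left hm, Measure.map_smul, map_add_right_eq_self volume k]

lemma qmp_affine (m k : ℝ) (hm : m ≠ 0) :
    Measure.QuasiMeasurePreserving (fun t : ℝ => m * t + k) volume volume := by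
  refine ⟨(measurable_const_mul m).add_const k, ?_⟩
  rw [map_affine m k hm]
  exact Measure.AbsolutelyContinuous.mk fun s _ h => by simp [Measure.smul_apply, h]

lemma lintegral_affine (H : ℝ → ℝ≥0∞) (m k a b : ℝ) (hm : 0 < m) :
    ∫⁻ t in Ioc a b, H (m * t + k) ∂volume
      = ENNReal.ofReal m⁻¹ * ∫⁻ s in Ioc (m * a + k) (m * b + k), H s ∂volume := by
  have hme : MeasurableEmbedding (fun t : ℝ => m * t + k) :=
    (affineHomeomorph m k hm.ne').measurableEmbedding
  have hpre : (fun t : ℝ => m * t + k) ⁻¹' (Ioc (m * a + k) (m * b + k)) = Ioc a b := by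
    ext t
    simp only [Set.mem_preimage, Set.mem_Ioc, add_lt_add_iff_right, add_le_add_iff_right,
      mul_lt_mul_iff_right₀ hm, mul_le_mul_iff_right₀ hm]
  calc ∫⁻ t in Ioc a b, H (m * t + k) ∂volume
      = ∫⁻ s, H s ∂(Measure.map (fun t : ℝ => m * t + k) (volume.restrict (Ioc a b))) :=
        (hme.lintegral_map H).symm
    _ = ENNReal.ofReal m⁻¹ * ∫⁻ s in Ioc (m * a + k) (m * b + k), H s ∂volume := by
        rw [← hpre, ← Measure.restrict_map hme.measurable measurableSet_Ioc,
          map_affine m k hm.ne', Measure.restrict_smul, lintegral_smul_measure,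
          abs_of_pos (inv_pos.mpr hm), smul_eq_mul]

lemma iUnion_Ioc {N : ℕ} (x : Fin (N + 1) → ℝ) (hx : StrictMono x) :
    ⋃ n : Fin N, Ioc (x n.castSucc) (x n.succ) = Ioc (x 0) (x (Fin.last N)) := by
  classical
  apply Set.Subset.antisymm
  · exact Set.iUnion_subset fun n =>
      Set.Ioc_subset_Ioc (hx.monotone (Fin.zero_le _)) (hx.monotone (Fin.le_last _))
  · intro t ht
    set S := Finset.univ.filter (fun k : Fin (N + 1) => x k < t) with hS
    have hSne : S.Nonempty := ⟨0, by simp [hS, ht.1]⟩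
    set n := S.max' hSne with hn
    have hnx : x n < t := (Finset.mem_filter.mp (S.max'_mem hSne)).2
    have hnlast : n ≠ Fin.last N := by
      intro h
      rw [h] at hnx
      exact absurd hnx (not_lt.mpr ht.2)
    have hnlt : (n : ℕ) < N := Fin.val_lt_last hnlast
    refine Set.mem_iUnion.mpr ⟨⟨(n : ℕ), hnlt⟩, ?_, ?_⟩
    · have hcast : (⟨(n : ℕ), hnlt⟩ : Fin N).castSucc = n := by
        ext; simp
      rw [hcast]; exact hnx
    · by_contra h
      push_neg at h
      have hmem : ((⟨(n : ℕ), hnlt⟩ : Fin N).succ : Fin (N + 1)) ∈ S :=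
        Finset.mem_filter.mpr ⟨Finset.mem_univ _, h⟩
      have hle := S.le_max' _ hmem
      rw [← hn] at hle
      have : (n : ℕ) + 1 ≤ (n : ℕ) := by
        simpa [Fin.le_def] using hle
      omega

lemma sum_tele {N : ℕ} (x : Fin (N + 1) → ℝ) :
    ∑ n : Fin N, (x n.succ - x n.castSucc) = x (Fin.last N) - x 0 := by
  have key : ∀ n : Fin N, x n.succ - x n.castSucc
      = (fun i : ℕ => x ⟨min i N, by omega⟩) (n.val + 1) - (fun i : ℕ => x ⟨min i N, by omega⟩) n.val := by
    intro n
    have h1 : (⟨min (n.val + 1) N, by omega⟩ : Fin (N + 1)) = n.succ := by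
      ext; simp [Nat.min_eq_left (Nat.succ_le_of_lt n.isLt)]
    have h2 : (⟨min n.val N, by omega⟩ : Fin (N + 1)) = n.castSucc := by
      ext; simp [Nat.min_eq_left (le_of_lt n.isLt)]
    simp only [h1, h2]
  rw [Finset.sum_congr rfl (fun n _ => key n),
    Fin.sum_univ_eq_sum_range (fun i => (fun i : ℕ => x ⟨min i N, by omega⟩) (i + 1) - (fun i : ℕ => x ⟨min i N, by omega⟩) i) N,
    Finset.sum_range_sub (fun i : ℕ => x ⟨min i N, by omega⟩)]
  congr 1
  · congr 1; ext; simp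

end FCaux

/-- For `0 < p < 1`, with `d_p(g,h) = ∫_I |g − h|^p`, the fractal
convolution `f *_T b` (the unique fixed point of the contraction `T_{f,b}` on
`(L^p(I), d_p)`, whose contraction factor is `Λ^p`) satisfies
`d_p(f *_T b, f) ≤ (Λ^p/(1 − Λ^p)) d_p(f, b)`. -/
theorem fractal_convolution_distance_to_seed_small_p
    (N : ℕ) (hN : 2 ≤ N) (x : Fin (N + 1) → ℝ) (hx : StrictMono x)
    (μ : Measure ℝ) (hμ : μ = volume.restrict (Set.Icc (x 0) (x (Fin.last N))))
    (p : ℝ) (hp0 : 0 < p) (hp1 : p < 1)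
    (α : Fin N → Lp ℝ ∞ μ)
    (Λ : ℝ) (hΛdef : Λ = ⨆ n : Fin N, ‖α n‖) (hΛ : Λ < 1)
    (f b fb : ℝ → ℝ)
    (hf : MemLp f (ENNReal.ofReal p) μ) (hb : MemLp b (ENNReal.ofReal p) μ)
    (hfbmem : MemLp fb (ENNReal.ofReal p) μ)
    (hfb : SelfRef μ x (fun n => ⇑(α n)) f b fb)
    (huniq : ∀ g : ℝ → ℝ, MemLp g (ENNReal.ofReal p) μ →
      SelfRef μ x (fun n => ⇑(α n)) f b g → g =ᵐ[μ] fb) :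
    ∫ t, |fb t - f t| ^ p ∂μ ≤ Λ ^ p / (1 - Λ ^ p) * ∫ t, |f t - b t| ^ p ∂μ := by
  classical
  have hNpos : 0 < N := by omega
  -- basic positivity facts
  have hcd : x 0 < x (Fin.last N) := hx (by rw [Fin.lt_def]; simpa using hNpos)
  have hΛ0 : 0 ≤ Λ := by
    have h1 : ‖α ⟨0, hNpos⟩‖ ≤ Λ := hΛdef ▸ le_ciSup (f := fun n : Fin N => ‖α n‖) (Set.Finite.bddAbove (Set.finite_range _)) ⟨0, hNpos⟩
    exact le_trans (norm_nonneg _) h1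
  set q := Λ ^ p with hq
  have hq0 : 0 ≤ q := Real.rpow_nonneg hΛ0 p
  have hq1 : q < 1 := Real.rpow_lt_one hΛ0 hΛ hp0
  set c := x 0 with hc
  set d := x (Fin.last N) with hd
  set F : ℝ → ℝ≥0∞ := fun t => ENNReal.ofReal |fb t - f t| ^ p with hF
  set G : ℝ → ℝ≥0∞ := fun t => ENNReal.ofReal |f t - b t| ^ p with hG
  set J : Fin N → Set ℝ := fun n => Set.Ioc (x n.castSucc) (x n.succ) with hJ
  set LL := ∫⁻ t in Set.Ioc c d, F t ∂volume with hLL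
  set EE := ∫⁻ t in Set.Ioc c d, G t ∂volume with hEE
  have hμIoc : μ = volume.restrict (Set.Ioc c d) := by
    rw [hμ]; exact (Measure.restrict_congr_set Ioc_ae_eq_Icc).symm
  have hpne0 : (ENNReal.ofReal p) ≠ 0 := by simp [hp0, ENNReal.ofReal_eq_zero, not_le]
  have hpnetop : (ENNReal.ofReal p) ≠ ∞ := ENNReal.ofReal_ne_top
  have htoRealp : (ENNReal.ofReal p).toReal = p := ENNReal.toReal_ofReal hp0.le
  -- finiteness of LL and EE
  have hfin : ∀ g h : ℝ → ℝ, MemLp g (ENNReal.ofReal p) μ → MemLp h (ENNReal.ofReal p) μ →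
      ∫⁻ t, (ENNReal.ofReal |g t - h t| ^ p) ∂μ ≠ ∞ := by
    intro g h hg hh
    have h1 := (hg.sub hh).2
    rw [eLpNorm_lt_top_iff_lintegral_rpow_enorm_lt_top hpne0 hpnetop, htoRealp] at h1
    have h2 : (∫⁻ t, ‖(g - h) t‖ₑ ^ p ∂μ) = ∫⁻ t, (ENNReal.ofReal |g t - h t| ^ p) ∂μ := by
      apply lintegral_congr; intro t
      rw [Pi.sub_apply, Real.enorm_eq_ofReal_abs]
    rw [h2] at h1
    exact h1.ne
  have hLLfin : LL ≠ ∞ := by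
    have h2 := hfin fb f hfbmem hf
    rw [hμIoc] at h2
    exact h2
  have hEEfin : EE ≠ ∞ := by
    have := hfin f b hf hb
    rw [hμIoc] at this
    exact this
  -- a.e. measurability of F and G w.r.t. any measure ≤ μ
  have hFmeas : AEMeasurable F (volume.restrict (Set.Ioc c d)) := by
    have h1 : AEMeasurable (fun t => (‖fb t - f t‖₊ : ℝ≥0∞)) μ := (hfbmem.1.sub hf.1).enorm
    have h2 : AEMeasurable F μ := by
      have := h1.pow (aemeasurable_const (b := p))
      refine this.congr (Filter.Eventually.of_forall fun t => ?_)
      rw [hF]; simp only [← enorm_eq_nnnorm, Real.enorm_eq_ofReal_abs]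
    rw [hμIoc] at h2; exact h2
  have hGmeas : AEMeasurable G (volume.restrict (Set.Ioc c d)) := by
    have h1 : AEMeasurable (fun t => (‖f t - b t‖₊ : ℝ≥0∞)) μ := (hf.1.sub hb.1).enorm
    have h2 : AEMeasurable G μ := by
      have := h1.pow (aemeasurable_const (b := p))
      refine this.congr (Filter.Eventually.of_forall fun t => ?_)
      rw [hG]; simp only [← enorm_eq_nnnorm, Real.enorm_eq_ofReal_abs]
    rw [hμIoc] at h2; exact h2
  -- the L∞ bound on the scale functions
  have hαΛ : ∀ n : Fin N, ∀ᵐ s ∂μ, |(α n : ℝ → ℝ) s| ≤ Λ := by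
    intro n
    have h1 := enorm_ae_le_eLpNormEssSup (α n : ℝ → ℝ) μ
    have hfin' : eLpNormEssSup (α n : ℝ → ℝ) μ ≠ ∞ := by
      have h2 := Lp.eLpNorm_lt_top (α n)
      rw [eLpNorm_exponent_top] at h2
      exact h2.ne
    have hnorm : ‖α n‖ = (eLpNormEssSup (α n : ℝ → ℝ) μ).toReal := by
      rw [Lp.norm_def, eLpNorm_exponent_top]
    filter_upwards [h1] with s hs
    have h3 : ((‖(α n : ℝ → ℝ) s‖₊ : ℝ≥0∞)).toReal ≤ (eLpNormEssSup (α n : ℝ → ℝ) μ).toReal :=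
      ENNReal.toReal_mono hfin' hs
    calc |(α n : ℝ → ℝ) s| = ((‖(α n : ℝ → ℝ) s‖₊ : ℝ≥0∞)).toReal := by
          simp [Real.norm_eq_abs]
      _ ≤ (eLpNormEssSup (α n : ℝ → ℝ) μ).toReal := h3
      _ = ‖α n‖ := hnorm.symm
      _ ≤ Λ := hΛdef ▸ le_ciSup (f := fun n : Fin N => ‖α n‖) (Set.Finite.bddAbove (Set.finite_range _)) n
  -- key per-interval estimate
  have key : ∀ n : Fin N, ∫⁻ t in J n, F t ∂volume
      ≤ ENNReal.ofReal ((x n.succ - x n.castSucc) / (d - c)) * (ENNReal.ofReal q * (LL + EE)) := by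
    intro n
    have hΔ : (0:ℝ) < x n.succ - x n.castSucc := sub_pos.mpr (hx (Fin.castSucc_lt_succ (i := n)))
    set m := (d - c) / (x n.succ - x n.castSucc) with hm'
    have hm : 0 < m := div_pos (sub_pos.mpr hcd) hΔ
    set k := c - m * x n.castSucc with hk'
    have hφL : ∀ t, Linv x n t = m * t + k := by
      intro t
      show x 0 + (t - x n.castSucc) * (x (Fin.last N) - x 0) / (x n.succ - x n.castSucc)
        = m * t + k
      rw [hk', hm', ← hc, ← hd]
      ring
    have hφa : m * x n.castSucc + k = c := by rw [hk']; ring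
    have hφb : m * x n.succ + k = d := by
      rw [hk', hm']
      field_simp
      ring
    have hsubI : J n ⊆ Set.Icc c d := by
      intro t ht
      exact ⟨le_trans (hx.monotone (Fin.zero_le _)) ht.1.le,
        le_trans ht.2 (hx.monotone (Fin.le_last _))⟩
    have hν : μ.restrict (J n) = volume.restrict (J n) := by
      rw [hμ, Measure.restrict_restrict measurableSet_Ioc,
        Set.inter_eq_self_of_subset_left hsubI]
    have hsub : J n ⊆ subInt x n := by
      rw [hJ, subInt]
      split
      · exact Set.Ioc_subset_Icc_self
      · exact Set.Subset.rfl
    have h1 : ∀ᵐ t ∂(volume.restrict (J n)),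
        fb t = f t + (α n : ℝ → ℝ) (m * t + k) * (fb (m * t + k) - b (m * t + k)) := by
      rw [← hν]
      filter_upwards [(hfb n).filter_mono (ae_mono Measure.restrict_le_self),
        ae_restrict_mem measurableSet_Ioc] with t h1 h2
      have := h1 (hsub h2)
      rwa [hφL t] at this
    have h2' : ∀ᵐ t ∂(volume.restrict (J n)), |(α n : ℝ → ℝ) (m * t + k)| ≤ Λ := by
      have hα' : ∀ᵐ s ∂volume, s ∈ Set.Icc c d → |(α n : ℝ → ℝ) s| ≤ Λ := by
        apply ae_imp_of_ae_restrict
        rw [← hμ]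
        exact hαΛ n
      have h2 : ∀ᵐ t ∂volume, (m * t + k) ∈ Set.Icc c d → |(α n : ℝ → ℝ) (m * t + k)| ≤ Λ :=
        (FCaux.qmp_affine m k hm.ne').ae hα'
      filter_upwards [ae_restrict_of_ae h2, ae_restrict_mem measurableSet_Ioc] with t ht hmem
      apply ht
      constructor
      · rw [← hφa]
        have := mul_le_mul_of_nonneg_left hmem.1.le hm.le
        linarith
      · rw [← hφb]
        have := mul_le_mul_of_nonneg_left hmem.2 hm.le
        linarith
    have hbd : ∀ᵐ t ∂(volume.restrict (J n)),
        F t ≤ ENNReal.ofReal q * (F (m * t + k) + G (m * t + k)) := by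
      filter_upwards [h1, h2'] with t h1 h2
      set s := m * t + k with hs
      have e1 : |fb t - f t| = |(α n : ℝ → ℝ) s| * |fb s - b s| := by
        rw [h1, add_sub_cancel_left, abs_mul]
      have e2 : F t = (ENNReal.ofReal |(α n : ℝ → ℝ) s| * ENNReal.ofReal |fb s - b s|) ^ p := by
        rw [hF]
        simp only
        rw [e1, ENNReal.ofReal_mul (abs_nonneg _)]
      rw [e2, ENNReal.mul_rpow_of_nonneg _ _ hp0.le]
      have e3 : ENNReal.ofReal |(α n : ℝ → ℝ) s| ^ p ≤ ENNReal.ofReal q := by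
        rw [hq, ← ENNReal.ofReal_rpow_of_nonneg hΛ0 hp0.le]
        exact ENNReal.rpow_le_rpow (ENNReal.ofReal_le_ofReal h2) hp0.le
      have e4 : ENNReal.ofReal |fb s - b s| ^ p ≤ F s + G s := by
        calc ENNReal.ofReal |fb s - b s| ^ p
            ≤ (ENNReal.ofReal (|fb s - f s| + |f s - b s|)) ^ p :=
              ENNReal.rpow_le_rpow (ENNReal.ofReal_le_ofReal (abs_sub_le _ _ _)) hp0.le
          _ = (ENNReal.ofReal |fb s - f s| + ENNReal.ofReal |f s - b s|) ^ p := by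
              rw [ENNReal.ofReal_add (abs_nonneg _) (abs_nonneg _)]
          _ ≤ F s + G s := ENNReal.rpow_add_le_add_rpow _ _ hp0.le hp1.le
      exact mul_le_mul' e3 e4
    have hchange : ∫⁻ t in J n, (fun s => F s + G s) (m * t + k) ∂volume
        = ENNReal.ofReal m⁻¹ * (LL + EE) := by
      rw [hJ]
      simp only
      rw [FCaux.lintegral_affine (fun s => F s + G s) m k _ _ hm, hφa, hφb]
      congr 1
      rw [hLL, hEE]
      exact lintegral_add_left' hFmeas G
    calc ∫⁻ t in J n, F t ∂volume
        ≤ ∫⁻ t in J n, ENNReal.ofReal q * (F (m * t + k) + G (m * t + k)) ∂volume :=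
          lintegral_mono_ae hbd
      _ = ENNReal.ofReal q * ∫⁻ t in J n, (fun s => F s + G s) (m * t + k) ∂volume :=
          lintegral_const_mul' _ _ ENNReal.ofReal_ne_top
      _ = ENNReal.ofReal q * (ENNReal.ofReal m⁻¹ * (LL + EE)) := by rw [hchange]
      _ = ENNReal.ofReal ((x n.succ - x n.castSucc) / (d - c)) * (ENNReal.ofReal q * (LL + EE)) := by
          rw [hm', inv_div]
          ring
  -- pairwise disjointness and decomposition
  have hdisjaux : ∀ i j : Fin N, i < j → Disjoint (J i) (J j) := by
    intro i j h
    apply Set.disjoint_left.mpr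
    rintro t ⟨hi1, hi2⟩ ⟨hj1, hj2⟩
    have hle : x i.succ ≤ x j.castSucc := by
      apply hx.monotone
      rw [Fin.le_def]
      simp only [Fin.val_succ, Fin.coe_castSucc]
      exact Fin.lt_def.mp h
    exact lt_irrefl _ (hj1.trans_le (hi2.trans hle))
  have hdisj : Pairwise (Function.onFun Disjoint J) := fun i j hij =>
    (hij.lt_or_gt).elim (hdisjaux i j) (fun h => (hdisjaux j i h).symm)
  have hLdecomp : LL = ∑ n : Fin N, ∫⁻ t in J n, F t ∂volume := by
    rw [hLL, ← FCaux.iUnion_Ioc x hx, lintegral_iUnion (fun n => measurableSet_Ioc) hdisj F,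
      tsum_fintype]
  -- summing up
  have hsum : (∑ n : Fin N, ENNReal.ofReal ((x n.succ - x n.castSucc) / (d - c))) = 1 := by
    rw [← ENNReal.ofReal_sum_of_nonneg (fun n _ => div_nonneg (sub_pos.mpr (hx (Fin.castSucc_lt_succ (i := n)))).le (sub_pos.mpr hcd).le)]
    rw [← Finset.sum_div, FCaux.sum_tele x, ← hc, ← hd, div_self (sub_pos.mpr hcd).ne']
    exact ENNReal.ofReal_one
  have main : LL ≤ ENNReal.ofReal q * (LL + EE) := by
    calc LL = ∑ n : Fin N, ∫⁻ t in J n, F t ∂volume := hLdecomp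
      _ ≤ ∑ n : Fin N, ENNReal.ofReal ((x n.succ - x n.castSucc) / (d - c))
            * (ENNReal.ofReal q * (LL + EE)) := Finset.sum_le_sum fun n _ => key n
      _ = (∑ n : Fin N, ENNReal.ofReal ((x n.succ - x n.castSucc) / (d - c)))
            * (ENNReal.ofReal q * (LL + EE)) := (Finset.sum_mul _ _ _).symm
      _ = ENNReal.ofReal q * (LL + EE) := by rw [hsum, one_mul]
  -- back to real numbers
  have hreal : LL.toReal ≤ q * (LL.toReal + EE.toReal) := by
    have hrhs : (ENNReal.ofReal q * (LL + EE)).toReal = q * (LL.toReal + EE.toReal) := by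
      rw [ENNReal.toReal_mul, ENNReal.toReal_ofReal hq0, ENNReal.toReal_add hLLfin hEEfin]
    have h2 := ENNReal.toReal_mono
      (ENNReal.mul_ne_top ENNReal.ofReal_ne_top (ENNReal.add_ne_top.mpr ⟨hLLfin, hEEfin⟩)) main
    rwa [hrhs] at h2
  -- convert the statement integrals
  have hstmt : ∀ g h : ℝ → ℝ, MemLp g (ENNReal.ofReal p) μ → MemLp h (ENNReal.ofReal p) μ →
      ∫ t, |g t - h t| ^ p ∂μ = (∫⁻ t in Set.Ioc c d, ENNReal.ofReal |g t - h t| ^ p ∂volume).toReal := by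
    intro g h hg hh
    have hmeas : AEStronglyMeasurable (fun t => |g t - h t| ^ p) μ := by
      have h1 : AEMeasurable (fun t => ‖g t - h t‖) μ := (hg.1.sub hh.1).norm.aemeasurable
      have h2 := h1.pow (aemeasurable_const (b := p))
      refine (h2.congr (Filter.Eventually.of_forall fun t => ?_)).aestronglyMeasurable
      simp [Real.norm_eq_abs]
    rw [integral_eq_lintegral_of_nonneg_ae
      (Filter.Eventually.of_forall fun t => Real.rpow_nonneg (abs_nonneg _) p) hmeas]
    rw [hμIoc]
    congr 1
    apply lintegral_congr
    intro t
    exact (ENNReal.ofReal_rpow_of_nonneg (abs_nonneg _) hp0.le).symm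
  rw [hstmt fb f hfbmem hf, hstmt f b hf hb]
  have h1q : 0 < 1 - q := by linarith
  rw [div_mul_eq_mul_div, le_div_iff₀ h1q]
  have := hreal
  nlinarith [ENNReal.toReal_nonneg (a := EE)]

end
end
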